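/- arXiv:1502.04971 — 9 statements merged into one kernel-verified Lean document; each statement's English description precedes it below -/
import Mathlib

section
/- Let N > 1, let χ be an odd real Dirichlet character modulo N, and let B > 1 be an integer with gcd(B, N) = 1 and χ(B) = −1. Let e be the multiplicative order of B modulo N (necessarily e is even). Let x₁ be an integer with 1 ≤ x₁ ≤ N, gcd(x₁, N) = 1 and χ(x₁) = 1, and set x_i := ⟨B^{i−1}·x₁⟩ for 1 ≤ i ≤ e + 1 (so x_{e+1} = x₁) and a_i := (B·x_i − x_{i+1})/N for 1 ≤ i ≤ e. Then (B + 1)·(−(1/N)·Σ_{i=1}^{e} χ(x_i)·x_i) = Σ_{i=1}^{e} (−1)^{i}·a_i. -/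
/-- the cycle contribution formula when χ(B) = −1.  Here `χ` is an
odd real Dirichlet character modulo `N`, `e` is the multiplicative order of `B`
modulo `N`, `r z` plays the role of `⟨z⟩` (the unique `y` with `1 ≤ y ≤ N` and
`z ≡ y (mod N)`), `x_i = r (B^(i-1)·x₁)` and `a_i = (B·x_i − x_{i+1})/N`. -/
theorem cycle_formula_chiB_neg_one (N : ℤ) (hN : 1 < N) (χ : ℤ → ℤ)
    (hval : ∀ a, χ a = 0 ∨ χ a = 1 ∨ χ a = -1)
    (hmul : ∀ a b, χ (a * b) = χ a * χ b)
    (hper : ∀ a b, a ≡ b [ZMOD N] → χ a = χ b)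
    (hzero : ∀ a, χ a = 0 ↔ Int.gcd a N ≠ 1)
    (hodd : χ (-1) = -1)
    (B : ℤ) (hB : 1 < B) (hBN : Int.gcd B N = 1) (hχB : χ B = -1)
    (e : ℕ) (he : 0 < e) (heB : B ^ e ≡ 1 [ZMOD N])
    (hemin : ∀ j : ℕ, 0 < j → j < e → ¬ B ^ j ≡ 1 [ZMOD N])
    (x₁ : ℤ) (hx₁1 : 1 ≤ x₁) (hx₁N : x₁ ≤ N) (hx₁ : Int.gcd x₁ N = 1)
    (hχx₁ : χ x₁ = 1)
    (r : ℤ → ℤ) (hr : ∀ z, 1 ≤ r z ∧ r z ≤ N ∧ r z ≡ z [ZMOD N]) :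
    ((B : ℚ) + 1) *
        (-(1 / (N : ℚ)) *
          ∑ i ∈ Finset.Icc 1 e,
            (χ (r (B ^ (i - 1) * x₁)) : ℚ) * (r (B ^ (i - 1) * x₁) : ℚ)) =
      ∑ i ∈ Finset.Icc 1 e,
        (-1 : ℚ) ^ i *
          (((B * r (B ^ (i - 1) * x₁) - r (B ^ i * x₁) : ℤ) : ℚ) / (N : ℚ)) := by
  have hχ1 : χ 1 = 1 := by
    have h0 : χ 1 ≠ 0 := by simp [hzero]
    have h11 := hmul 1 1
    rw [one_mul] at h11
    rcases hval 1 with h | h | h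
    · exact absurd h h0
    · exact h
    · rw [h] at h11; norm_num at h11
  have hpow : ∀ n : ℕ, χ (B ^ n) = (-1) ^ n := by
    intro n
    induction n with
    | zero => simpa using hχ1
    | succ k ih => rw [pow_succ, hmul, ih, hχB, pow_succ]
  have hχg : ∀ i : ℕ, χ (r (B ^ i * x₁)) = (-1) ^ i := by
    intro i
    rw [hper _ _ (hr _).2.2, hmul, hpow, hχx₁, mul_one]
  have heven : Even e := by
    have h1 : ((-1 : ℤ)) ^ e = 1 := by
      rw [← hpow, hper _ _ heB, hχ1]
    rcases Nat.even_or_odd e with h | h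
    · exact h
    · rw [h.neg_one_pow] at h1; norm_num at h1
  have huniq : ∀ z w : ℤ, 1 ≤ z → z ≤ N → 1 ≤ w → w ≤ N → z ≡ w [ZMOD N] → z = w := by
    intro z w h1 h2 h3 h4 h5
    have hd : N ∣ w - z := h5.dvd
    have h0 : w - z = 0 := Int.eq_zero_of_abs_lt_dvd hd (by rw [abs_sub_lt_iff]; omega)
    omega
  have hge0 : r (B ^ e * x₁) = r (B ^ 0 * x₁) := by
    refine huniq _ _ (hr _).1 (hr _).2.1 (hr _).1 (hr _).2.1 ?_
    calc r (B ^ e * x₁) ≡ B ^ e * x₁ [ZMOD N] := (hr _).2.2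
      _ ≡ 1 * x₁ [ZMOD N] := heB.mul_right x₁
      _ ≡ B ^ 0 * x₁ [ZMOD N] := by rw [pow_zero]
      _ ≡ r (B ^ 0 * x₁) [ZMOD N] := ((hr _).2.2).symm
  set g : ℕ → ℚ := fun i => ((r (B ^ i * x₁) : ℤ) : ℚ) with hg
  set T : ℚ := ∑ i ∈ Finset.range e, (-1 : ℚ) ^ i * g i with hT
  set U : ℚ := ∑ i ∈ Finset.range e, (-1 : ℚ) ^ i * g (i + 1) with hU
  have hgE : g e = g 0 := by simp only [hg]; rw [hge0]
  have hUT : U = -T := by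
    have hV1 : ∑ i ∈ Finset.range (e + 1), (-1 : ℚ) ^ i * g i
        = T + (-1 : ℚ) ^ e * g e := by rw [Finset.sum_range_succ]
    have hV2 : ∑ i ∈ Finset.range (e + 1), (-1 : ℚ) ^ i * g i
        = (∑ i ∈ Finset.range e, (-1 : ℚ) ^ (i + 1) * g (i + 1)) + (-1 : ℚ) ^ 0 * g 0 := by
      rw [Finset.sum_range_succ']
    have he1 : ((-1 : ℚ)) ^ e = 1 := heven.neg_one_pow
    have hneg : ∑ i ∈ Finset.range e, (-1 : ℚ) ^ (i + 1) * g (i + 1) = -U := by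
      rw [hU, ← Finset.sum_neg_distrib]
      exact Finset.sum_congr rfl fun i _ => by ring
    rw [hV2, hneg, he1, hgE] at hV1
    linarith
  have hlhs : ∑ i ∈ Finset.Icc 1 e,
      (χ (r (B ^ (i - 1) * x₁)) : ℚ) * (r (B ^ (i - 1) * x₁) : ℚ) = T := by
    rw [← Finset.Ico_add_one_right_eq_Icc, Finset.sum_Ico_eq_sum_range, Nat.add_sub_cancel, hT]
    refine Finset.sum_congr rfl fun i _ => ?_
    have h1 : 1 + i - 1 = i := by omega
    rw [h1, hχg]
    push_cast
    ring
  have hrhs : ∑ i ∈ Finset.Icc 1 e,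
      (-1 : ℚ) ^ i * (((B * r (B ^ (i - 1) * x₁) - r (B ^ i * x₁) : ℤ) : ℚ) / (N : ℚ))
      = -(B : ℚ) / N * T + (1 / N) * U := by
    rw [← Finset.Ico_add_one_right_eq_Icc, Finset.sum_Ico_eq_sum_range, Nat.add_sub_cancel, hT, hU, Finset.mul_sum, Finset.mul_sum,
      ← Finset.sum_add_distrib]
    refine Finset.sum_congr rfl fun i _ => ?_
    have h1 : 1 + i - 1 = i := by omega
    rw [h1]
    simp only [hg]
    push_cast
    ring
  have hN0 : (N : ℚ) ≠ 0 := by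
    have : (0 : ℚ) < (N : ℚ) := by exact_mod_cast (by omega : (0:ℤ) < N)
    linarith
  rw [hlhs, hrhs, hUT]
  field_simp
  ring
end

section
/- Let N > 1, let χ be an odd real Dirichlet character modulo N, and let B > 1 be an integer with gcd(B, N) = 1 and χ(B) = 1. Let e be the multiplicative order of B modulo N. Let x₁ be an integer with 1 ≤ x₁ ≤ N and gcd(x₁, N) = 1, and set x_i := ⟨B^{i−1}·x₁⟩ for 1 ≤ i ≤ e + 1 (so x_{e+1} = x₁) and a_i := (B·x_i − x_{i+1})/N for 1 ≤ i ≤ e. Then (B − 1)·(−(1/N)·Σ_{i=1}^{e} χ(x_i)·x_i) = −χ(x₁)·Σ_{i=1}^{e} a_i. -/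
/-- the cycle contribution formula when χ(B) = 1.  Here `χ` is an
odd real Dirichlet character modulo `N`, `e` is the multiplicative order of `B`
modulo `N`, `r z` plays the role of `⟨z⟩` (the unique `y` with `1 ≤ y ≤ N` and
`z ≡ y (mod N)`), `x_i = r (B^(i-1)·x₁)` and `a_i = (B·x_i − x_{i+1})/N`. -/
theorem cycle_formula_chiB_one (N : ℤ) (hN : 1 < N) (χ : ℤ → ℤ)
    (hval : ∀ a, χ a = 0 ∨ χ a = 1 ∨ χ a = -1)
    (hmul : ∀ a b, χ (a * b) = χ a * χ b)
    (hper : ∀ a b, a ≡ b [ZMOD N] → χ a = χ b)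
    (hzero : ∀ a, χ a = 0 ↔ Int.gcd a N ≠ 1)
    (hodd : χ (-1) = -1)
    (B : ℤ) (hB : 1 < B) (hBN : Int.gcd B N = 1) (hχB : χ B = 1)
    (e : ℕ) (he : 0 < e) (heB : B ^ e ≡ 1 [ZMOD N])
    (hemin : ∀ j : ℕ, 0 < j → j < e → ¬ B ^ j ≡ 1 [ZMOD N])
    (x₁ : ℤ) (hx₁1 : 1 ≤ x₁) (hx₁N : x₁ ≤ N) (hx₁ : Int.gcd x₁ N = 1)
    (r : ℤ → ℤ) (hr : ∀ z, 1 ≤ r z ∧ r z ≤ N ∧ r z ≡ z [ZMOD N]) :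
    ((B : ℚ) - 1) *
        (-(1 / (N : ℚ)) *
          ∑ i ∈ Finset.Icc 1 e,
            (χ (r (B ^ (i - 1) * x₁)) : ℚ) * (r (B ^ (i - 1) * x₁) : ℚ)) =
      -(χ x₁ : ℚ) *
        ∑ i ∈ Finset.Icc 1 e,
          ((B * r (B ^ (i - 1) * x₁) - r (B ^ i * x₁) : ℤ) : ℚ) / (N : ℚ) := by
  have hNQ : (N : ℚ) ≠ 0 := by
    have : (0:ℤ) < N := by omega
    exact_mod_cast this.ne'
  -- χ 1 = 1
  have hχ1 : χ 1 = 1 := by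
    have h0 : χ 1 ≠ 0 := by simp [hzero]
    have hm := hmul 1 1
    rcases hval 1 with h | h | h
    · exact absurd h h0
    · exact h
    · rw [h] at hm; norm_num at hm; exact hm
  have hχpow : ∀ k : ℕ, χ (B ^ k) = 1 := by
    intro k
    induction k with
    | zero => simpa using hχ1
    | succ n ih => rw [pow_succ, hmul, ih, hχB]; norm_num
  have hrunique : ∀ z y : ℤ, 1 ≤ y → y ≤ N → y ≡ z [ZMOD N] → r z = y := by
    intro z y h1 h2 hzy
    obtain ⟨h3, h4, h5⟩ := hr z
    have hmod : r z ≡ y [ZMOD N] := h5.trans hzy.symm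
    have hdvd : N ∣ y - r z := Int.ModEq.dvd hmod
    have habs : |y - r z| < N := by rw [abs_lt]; omega
    have := Int.eq_zero_of_abs_lt_dvd hdvd habs
    omega
  set F : ℕ → ℤ := fun i => r (B ^ i * x₁) with hF
  have hF0 : F 0 = x₁ := by
    apply hrunique _ _ hx₁1 hx₁N
    simp [Int.ModEq.refl]
  have hFe : F e = x₁ := by
    apply hrunique _ _ hx₁1 hx₁N
    have := (heB.mul_right x₁).symm
    simpa using this
  have hχF : ∀ i, χ (F i) = χ x₁ := by
    intro i
    have h1 : χ (F i) = χ (B ^ i * x₁) := hper _ _ (hr _).2.2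
    rw [h1, hmul, hχpow, one_mul]
  -- convert Icc sums to range sums
  have hIcc : ∀ g : ℕ → ℚ, ∑ i ∈ Finset.Icc 1 e, g i = ∑ i ∈ Finset.range e, g (1 + i) := by
    intro g
    rw [show Finset.Icc 1 e = Finset.Ico 1 (e+1) by rw [Finset.Ico_add_one_right_eq_Icc],
      Finset.sum_Ico_eq_sum_range]
    simp
  rw [hIcc, hIcc]
  simp only [show ∀ i : ℕ, 1 + i - 1 = i from fun i => by omega,
    show ∀ i : ℕ, B ^ (1 + i) = B ^ (i + 1) from fun i => by rw [add_comm]]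
  show ((B : ℚ) - 1) * (-(1 / (N : ℚ)) * ∑ i ∈ Finset.range e, (χ (F i) : ℚ) * (F i : ℚ))
      = -(χ x₁ : ℚ) * ∑ i ∈ Finset.range e, ((B * F i - F (i + 1) : ℤ) : ℚ) / (N : ℚ)
  -- telescoping
  set S : ℤ := ∑ i ∈ Finset.range e, F i with hS
  have hT : ∑ i ∈ Finset.range e, F (i + 1) = S := by
    have h1 := Finset.sum_range_succ' F e
    have h2 := Finset.sum_range_succ F e
    omega
  have hsum1 : ∑ i ∈ Finset.range e, (χ (F i) : ℚ) * (F i : ℚ) = (χ x₁ : ℚ) * (S : ℚ) := by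
    rw [hS]
    push_cast
    rw [Finset.mul_sum]
    exact Finset.sum_congr rfl fun i _ => by rw [hχF]
  have hsum2 : ∑ i ∈ Finset.range e, ((B * F i - F (i + 1) : ℤ) : ℚ) / (N : ℚ)
      = (((B - 1) * S : ℤ) : ℚ) / (N : ℚ) := by
    rw [← Finset.sum_div]
    congr 1
    rw [← Int.cast_sum]
    congr 1
    rw [Finset.sum_sub_distrib, hT, ← Finset.mul_sum, ← hS]
    ring
  rw [hsum1, hsum2]
  push_cast
  ring
end

section
/- Let N > 1, let χ be an odd real Dirichlet character modulo N, and let B > 1 be an integer with gcd(B, N) = 1. Then −Σ_{x=1}^{N} χ(x)·⌊Bx/N⌋ = (B − χ(B))·h. -/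
open Finset

/-- the class number formula in terms of floors,
`−Σ_{x=1}^{N} χ(x)·⌊Bx/N⌋ = (B − χ(B))·h`, where
`h = −(1/N)·Σ_{x=1}^{N} χ(x)·x`. -/
theorem floor_class_number_formula (N : ℤ) (hN : 1 < N) (χ : ℤ → ℤ)
    (hval : ∀ a, χ a = 0 ∨ χ a = 1 ∨ χ a = -1)
    (hmul : ∀ a b, χ (a * b) = χ a * χ b)
    (hper : ∀ a b, a ≡ b [ZMOD N] → χ a = χ b)
    (hzero : ∀ a, χ a = 0 ↔ Int.gcd a N ≠ 1)
    (hodd : χ (-1) = -1)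
    (B : ℤ) (hB : 1 < B) (hBN : Int.gcd B N = 1) :
    -(∑ x ∈ Finset.Icc (1 : ℤ) N, (χ x : ℚ) * (⌊((B : ℚ) * (x : ℚ)) / (N : ℚ)⌋ : ℚ)) =
      ((B : ℚ) - (χ B : ℚ)) *
        (-(1 / (N : ℚ)) * ∑ x ∈ Finset.Icc (1 : ℤ) N, (χ x : ℚ) * (x : ℚ)) := by
  have hN0 : (0:ℤ) < N := by linarith
  have hχ0 : χ 0 = 0 := (hzero 0).mpr (by rw [Int.gcd_zero_left]; omega)
  have hχN : χ N = 0 := (hzero N).mpr (by rw [Int.gcd_self]; omega)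
  have hχB : χ B = 1 ∨ χ B = -1 := by
    rcases hval B with h | h | h
    · exact absurd ((hzero B).mp h) (by simp [hBN])
    · exact Or.inl h
    · exact Or.inr h
  have hχB2 : χ B * χ B = 1 := by rcases hχB with h | h <;> rw [h] <;> norm_num
  -- a multiplicative inverse of B mod N
  obtain ⟨u, v, huv⟩ := Int.isCoprime_iff_gcd_eq_one.mpr hBN
  have hBC : B * u % N = 1 % N := by
    have h1 : B * u = 1 + N * (-v) := by linarith
    rw [h1, Int.add_mul_emod_self_left]
  have hinv : ∀ x : ℤ, 0 ≤ x → x < N → u * (B * x % N) % N = x := by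
    intro x hx1 hx2
    have h1 : u * (B * x % N) % N = u * (B * x) % N := by
      rw [Int.mul_emod, Int.emod_emod_of_dvd _ dvd_rfl, ← Int.mul_emod]
    have h2 : u * (B * x) = B * u * x := by ring
    rw [h1, h2, Int.mul_emod, hBC, ← Int.mul_emod, one_mul,
      Int.emod_eq_of_lt hx1 hx2]
  -- conversion between `Icc 1 N` and `Ico 0 N` sums
  have hIccIco : ∀ f : ℤ → ℤ, f 0 = 0 → f N = 0 →
      ∑ x ∈ Icc (1:ℤ) N, f x = ∑ x ∈ Ico (0:ℤ) N, f x := by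
    intro f h0 hNf
    have e1 : Icc (1:ℤ) N = insert N (Ioo (0:ℤ) N) := by
      ext y; simp only [mem_Icc, mem_insert, mem_Ioo]; omega
    have e2 : Ico (0:ℤ) N = insert 0 (Ioo (0:ℤ) N) := by
      ext y; simp only [mem_Ico, mem_insert, mem_Ioo]; omega
    rw [e1, e2, Finset.sum_insert (by simp), Finset.sum_insert (by simp), h0, hNf]
  set S : ℤ := ∑ x ∈ Icc (1:ℤ) N, χ x * x with hS
  -- the reindexing step
  have hre : ∑ x ∈ Ico (0:ℤ) N, χ (B * x % N) * (B * x % N)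
      = ∑ y ∈ Ico (0:ℤ) N, χ y * y := by
    apply Finset.sum_nbij (i := fun x => B * x % N)
    · intro a ha
      simp only [mem_Ico] at *
      exact ⟨Int.emod_nonneg _ (by omega), Int.emod_lt_of_pos _ hN0⟩
    · intro a ha b hb hab
      simp only [coe_Ico, Set.mem_Ico] at ha hb
      simp only at hab
      calc a = u * (B * a % N) % N := (hinv a ha.1 ha.2).symm
        _ = u * (B * b % N) % N := by rw [hab]
        _ = b := hinv b hb.1 hb.2
    · intro y hy
      simp only [coe_Ico, Set.mem_Ico] at hy
      refine ⟨u * y % N, ?_, ?_⟩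
      · simp only [coe_Ico, Set.mem_Ico]
        exact ⟨Int.emod_nonneg _ (by omega), Int.emod_lt_of_pos _ hN0⟩
      · simp only
        have h1 : B * (u * y % N) % N = B * (u * y) % N := by
          rw [Int.mul_emod, Int.emod_emod_of_dvd _ dvd_rfl, ← Int.mul_emod]
        have h2 : B * (u * y) = B * u * y := by ring
        rw [h1, h2, Int.mul_emod, hBC, ← Int.mul_emod, one_mul,
          Int.emod_eq_of_lt hy.1 hy.2]
    · intro a _; rfl
  -- the key identity for the remainder sum
  have key : ∑ x ∈ Icc (1:ℤ) N, χ x * (B * x % N) = χ B * S := by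
    have e0 : ∑ x ∈ Icc (1:ℤ) N, χ x * (B * x % N)
        = ∑ x ∈ Ico (0:ℤ) N, χ x * (B * x % N) :=
      hIccIco _ (by rw [hχ0, zero_mul]) (by rw [hχN, zero_mul])
    have e1 : ∀ x : ℤ, χ B * (χ x * (B * x % N)) = χ (B * x % N) * (B * x % N) := by
      intro x
      have hmeq : B * x ≡ B * x % N [ZMOD N] := (Int.emod_emod_of_dvd _ dvd_rfl).symm
      rw [← mul_assoc, ← hmul, hper _ _ hmeq]
    have e2 : χ B * ∑ x ∈ Icc (1:ℤ) N, χ x * (B * x % N) = S := by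
      rw [e0, Finset.mul_sum]
      calc ∑ x ∈ Ico (0:ℤ) N, χ B * (χ x * (B * x % N))
          = ∑ x ∈ Ico (0:ℤ) N, χ (B * x % N) * (B * x % N) :=
            Finset.sum_congr rfl fun x _ => e1 x
        _ = ∑ y ∈ Ico (0:ℤ) N, χ y * y := hre
        _ = S := (hIccIco _ (by rw [hχ0, zero_mul]) (by rw [hχN, zero_mul])).symm
    calc ∑ x ∈ Icc (1:ℤ) N, χ x * (B * x % N)
        = (χ B * χ B) * ∑ x ∈ Icc (1:ℤ) N, χ x * (B * x % N) := by
          rw [hχB2, one_mul]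
      _ = χ B * (χ B * ∑ x ∈ Icc (1:ℤ) N, χ x * (B * x % N)) := by ring
      _ = χ B * S := by rw [e2]
  -- the main integer identity
  have main : N * ∑ x ∈ Icc (1:ℤ) N, χ x * (B * x / N) = (B - χ B) * S := by
    have hterm : ∀ x : ℤ, N * (χ x * (B * x / N)) = B * (χ x * x) - χ x * (B * x % N) := by
      intro x
      have h := Int.mul_ediv_add_emod (B * x) N
      linear_combination χ x * h
    rw [Finset.mul_sum, Finset.sum_congr rfl fun x _ => hterm x,
      Finset.sum_sub_distrib, ← Finset.mul_sum, key, hS]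
    ring
  -- cast to ℚ
  have hfloor : ∀ x : ℤ, ⌊((B:ℚ) * (x:ℚ)) / (N:ℚ)⌋ = B * x / N := by
    intro x
    have h1 : ((B:ℚ) * (x:ℚ)) = ((B * x : ℤ) : ℚ) := by push_cast; ring
    have h2 : ((N.toNat : ℕ) : ℚ) = (N : ℚ) := by
      rw [← Int.toNat_of_nonneg hN0.le]; push_cast; rw [Int.toNat_of_nonneg hN0.le]
    rw [h1, ← h2, Rat.floor_intCast_div_natCast, Int.toNat_of_nonneg hN0.le]
  have hsumfloor : ∑ x ∈ Icc (1:ℤ) N, (χ x : ℚ) * (⌊((B:ℚ) * (x:ℚ)) / (N:ℚ)⌋ : ℚ)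
      = ∑ x ∈ Icc (1:ℤ) N, (χ x : ℚ) * ((B * x / N : ℤ) : ℚ) :=
    Finset.sum_congr rfl fun x _ => by rw [hfloor x]
  have cast_main : (N:ℚ) * ∑ x ∈ Icc (1:ℤ) N, (χ x : ℚ) * ((B * x / N : ℤ) : ℚ)
      = ((B:ℚ) - (χ B : ℚ)) * ∑ x ∈ Icc (1:ℤ) N, (χ x : ℚ) * (x : ℚ) := by
    rw [hS] at main
    have := congrArg (fun z : ℤ => (z : ℚ)) main
    push_cast at this
    exact this
  have hNQ : (N:ℚ) ≠ 0 := by exact_mod_cast hN0.ne'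
  rw [hsumfloor]
  field_simp
  linear_combination (-1) * cast_main
end

section
/- Let p > 3 be a prime with p ≡ 3 (mod 4), let B > 1 be a primitive root modulo p, and for 1 ≤ i ≤ p − 1 let a_i := (B·⟨B^{i−1}⟩ − ⟨B^{i}⟩)/p be the i-th digit of the base-B expansion of 1/p. Then (B + 1)·h = Σ_{i=1}^{p−1} (−1)^{i}·a_i, where h := −(1/p)·Σ_{x=1}^{p−1} (x/p)·x and (x/p) is the Legendre symbol. (By Dirichlet's class number formula, h is the class number of ℚ(√−p).) -/
open Finset

private lemma alt_shift (F : ℕ → ℤ) (n : ℕ) (hn : Even n) (hF : F n = F 0) :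
    ∑ j ∈ range n, (-1 : ℤ) ^ j * F (j + 1) = -∑ j ∈ range n, (-1 : ℤ) ^ j * F j := by
  have h1 := Finset.sum_range_succ (fun k => (-1 : ℤ) ^ k * F k) n
  have h2 := Finset.sum_range_succ' (fun k => (-1 : ℤ) ^ k * F k) n
  have hpow : (-1 : ℤ) ^ n = 1 := hn.neg_one_pow
  simp only [pow_succ, pow_zero, one_mul] at h1 h2
  rw [hpow, one_mul, hF] at h1
  have h3 : ∑ j ∈ range n, (-1 : ℤ) ^ j * -1 * F (j + 1)
      = -∑ j ∈ range n, (-1 : ℤ) ^ j * F (j + 1) := by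
    rw [← Finset.sum_neg_distrib]
    exact Finset.sum_congr rfl fun j _ => by ring
  rw [h3] at h2
  linarith [h1.symm.trans h2]

/-- Girstmair's formula.  For a prime `p > 3` with `p ≡ 3 (mod 4)`
and `B > 1` a primitive root mod `p`, with digits `a_i = (B·⟨B^{i−1}⟩ − ⟨B^i⟩)/p`
of the base-`B` expansion of `1/p` (here `r z` plays the role of `⟨z⟩`, the
unique `y` with `1 ≤ y ≤ p` and `z ≡ y (mod p)`),
`(B+1)·h = Σ_{i=1}^{p−1} (−1)^i a_i` where
`h = −(1/p)·Σ_{x=1}^{p−1} (x/p)·x`. -/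
theorem girstmair (p : ℕ) [Fact p.Prime] (hp3 : 3 < p) (hpmod : p % 4 = 3)
    (B : ℤ) (hB : 1 < B) (hprim : orderOf (B : ZMod p) = p - 1)
    (r : ℤ → ℤ) (hr : ∀ z, 1 ≤ r z ∧ r z ≤ (p : ℤ) ∧ r z ≡ z [ZMOD (p : ℤ)]) :
    ((B : ℚ) + 1) *
        (-(1 / (p : ℚ)) *
          ∑ x ∈ Finset.Icc (1 : ℤ) ((p : ℤ) - 1), (legendreSym p x : ℚ) * (x : ℚ)) =
      ∑ i ∈ Finset.Icc 1 (p - 1),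
        (-1 : ℚ) ^ i * (((B * r (B ^ (i - 1)) - r (B ^ i) : ℤ) : ℚ) / (p : ℚ)) := by
  have hp : p.Prime := Fact.out
  set n := p - 1 with hn
  have hp1 : 1 < p := hp.one_lt
  have hnpos : 0 < n := by omega
  have hneven : Even n := by
    refine Nat.Odd.sub_odd ?_ ?_ <;> [skip; exact odd_one]
    have : p % 2 = 1 := by omega
    exact Nat.odd_iff.mpr this
  -- B is not 0 mod p
  have hBne : (B : ZMod p) ≠ 0 := by
    intro h
    have h1 : ((B : ZMod p)) ^ n = 1 := hprim ▸ pow_orderOf_eq_one _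
    rw [h, zero_pow hnpos.ne'] at h1
    exact zero_ne_one h1
  set F : ℕ → ℤ := fun j => r (B ^ j) with hF
  -- cast of F j
  have hcast : ∀ j : ℕ, ((F j : ZMod p)) = (B : ZMod p) ^ j := by
    intro j
    have h := (hr (B ^ j)).2.2
    have := (ZMod.intCast_eq_intCast_iff' _ _ _).mpr h
    rw [this]; push_cast; ring
  have hpow_ne : ∀ j : ℕ, ((B : ZMod p)) ^ j ≠ 0 := fun j => pow_ne_zero j hBne
  have hlow : ∀ j : ℕ, 1 ≤ F j := fun j => (hr (B ^ j)).1
  have hhigh : ∀ j : ℕ, F j ≤ (p : ℤ) - 1 := by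
    intro j
    have h1 : F j ≤ (p : ℤ) := (hr (B ^ j)).2.1
    rcases h1.lt_or_eq with h | h
    · omega
    · exfalso
      apply hpow_ne j
      rw [← hcast j, h]
      exact_mod_cast ZMod.natCast_self p
  -- periodicity
  have hFn : F n = F 0 := by
    have h1 : ((F n - F 0 : ℤ) : ZMod p) = 0 := by
      push_cast
      rw [hcast n, hcast 0, hprim.symm, pow_orderOf_eq_one, pow_zero, sub_self]
    have h2 : (p : ℤ) ∣ F n - F 0 := (ZMod.intCast_zmod_eq_zero_iff_dvd _ _).mp h1
    have h3 : |F n - F 0| < (p : ℤ) := by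
      have := hlow n; have := hhigh n; have := hlow 0; have := hhigh 0
      rw [abs_lt]; omega
    have := Int.eq_zero_of_abs_lt_dvd h2 h3
    omega
  -- injectivity of F on range n
  have hinj : Set.InjOn F (range n : Finset ℕ) := by
    intro j hj k hk hjk
    simp only [coe_range, Set.mem_Iio] at hj hk
    have : ((B : ZMod p)) ^ j = ((B : ZMod p)) ^ k := by
      rw [← hcast j, ← hcast k, hjk]
    exact pow_injOn_Iio_orderOf (by rwa [hprim]) (by rwa [hprim]) this
  -- legendre symbol of B is -1
  have hlegB : legendreSym p B = -1 := by
    rw [legendreSym.eq_neg_one_iff]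
    rintro ⟨c, hc⟩
    have hcne : c ≠ 0 := by rintro rfl; rw [mul_zero] at hc; exact hBne hc
    have h1 : ((B : ZMod p)) ^ (n / 2) = 1 := by
      rw [hc, ← pow_two, ← pow_mul]
      have h2 : 2 * (n / 2) = n := (Nat.div_mul_cancel hneven.two_dvd).symm ▸ by
        omega
      rw [h2, hn]
      exact ZMod.pow_card_sub_one_eq_one hcne
    have h3 : orderOf ((B : ZMod p)) ∣ n / 2 := orderOf_dvd_of_pow_eq_one h1
    have := Nat.le_of_dvd (by omega) h3
    omega
  -- legendre of F j
  have hleg : ∀ j : ℕ, legendreSym p (F j) = (-1 : ℤ) ^ j := by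
    intro j
    have h1 : legendreSym p (F j) = legendreSym p (B ^ j) := by
      show quadraticChar (ZMod p) ((F j : ℤ) : ZMod p)
        = quadraticChar (ZMod p) ((B ^ j : ℤ) : ZMod p)
      rw [hcast j]; push_cast; ring_nf
    rw [h1]
    have h2 : legendreSym p (B ^ j) = (legendreSym p B) ^ j := by
      have := map_pow (legendreSym.hom p) B j
      simpa using this
    rw [h2, hlegB]
  -- the image of range n under F is Icc 1 (p-1)
  have himage : (range n).image F = Finset.Icc (1 : ℤ) ((p : ℤ) - 1) := by
    apply Finset.eq_of_subset_of_card_le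
    · intro x hx
      simp only [mem_image] at hx
      obtain ⟨j, hj, rfl⟩ := hx
      exact Finset.mem_Icc.mpr ⟨hlow j, hhigh j⟩
    · rw [Finset.card_image_of_injOn hinj, Int.card_Icc, card_range]
      have : ((p : ℤ) - 1 + 1 - 1).toNat = p - 1 := by omega
      rw [this]
  set T : ℤ := ∑ j ∈ range n, (-1 : ℤ) ^ j * F j with hT
  -- the character sum equals T
  have hZ : ∑ x ∈ Finset.Icc (1 : ℤ) ((p : ℤ) - 1), legendreSym p x * x = T := by
    rw [← himage, Finset.sum_image hinj]
    exact Finset.sum_congr rfl fun j _ => by rw [hleg j]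
  -- the telescoping identity
  have key : ∑ i ∈ Finset.Icc 1 n, (-1 : ℤ) ^ i * (B * F (i - 1) - F i)
      = -(B + 1) * T := by
    rw [← Finset.Ico_add_one_right_eq_Icc, Finset.sum_Ico_eq_sum_range]
    have hrange : n + 1 - 1 = n := by omega
    rw [hrange]
    have hstep : ∀ j : ℕ, (-1 : ℤ) ^ (1 + j) * (B * F (1 + j - 1) - F (1 + j))
        = -(B * ((-1 : ℤ) ^ j * F j)) + (-1 : ℤ) ^ j * F (j + 1) := by
      intro j
      have h0 : 1 + j - 1 = j := by omega
      rw [h0, pow_add, (by omega : 1 + j = j + 1)]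
      ring
    rw [Finset.sum_congr rfl fun j _ => hstep j, Finset.sum_add_distrib,
      alt_shift F n hneven hFn, Finset.sum_neg_distrib, ← Finset.mul_sum, ← hT]
    ring
  -- assemble over ℚ
  have hQ1 : ∑ x ∈ Finset.Icc (1 : ℤ) ((p : ℤ) - 1), (legendreSym p x : ℚ) * (x : ℚ)
      = ((T : ℤ) : ℚ) := by
    rw [← hZ]; push_cast; ring
  have hQ2 : ∑ i ∈ Finset.Icc 1 n,
      (-1 : ℚ) ^ i * (((B * r (B ^ (i - 1)) - r (B ^ i) : ℤ) : ℚ) / (p : ℚ))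
      = ((∑ i ∈ Finset.Icc 1 n, (-1 : ℤ) ^ i * (B * F (i - 1) - F i) : ℤ) : ℚ) / (p : ℚ) := by
    rw [Int.cast_sum, Finset.sum_div]
    exact Finset.sum_congr rfl fun i _ => by push_cast; ring
  rw [hQ1, hQ2, key]
  have hpne : (p : ℚ) ≠ 0 := by positivity
  push_cast
  field_simp
end

section
/- Let N > 1, let χ be an odd real Dirichlet character modulo N, and let B ≥ 2 be an integer with gcd(B, N) = 1. Then Σ_{k=0}^{⌊B/2⌋−1} (B − 1 − 2k)·E_k(B) = (B − χ(B))·h. -/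
-- symmetry lemma: E (B-1-k) = - E k
lemma Esym (N : ℤ) (hN : 1 < N) (χ : ℤ → ℤ)
    (hneg : ∀ x, χ (N - x) = - χ x)
    (B k : ℤ) (hk0 : 0 ≤ k) (hk1 : k ≤ B - 1) :
    (∑ x ∈ (Finset.Icc (1 : ℤ) N).filter
        (fun x => (B-1-k) * N < B * x ∧ B * x < ((B-1-k) + 1) * N), χ x)
      = - ∑ x ∈ (Finset.Icc (1 : ℤ) N).filter
        (fun x => k * N < B * x ∧ B * x < (k + 1) * N), χ x := by
  rw [← Finset.sum_neg_distrib]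
  refine Finset.sum_nbij' (fun x => N - x) (fun x => N - x) ?_ ?_ ?_ ?_ ?_
  · intro a ha
    simp only [Finset.mem_filter, Finset.mem_Icc] at ha ⊢
    refine ⟨⟨by nlinarith [ha.2.1, ha.2.2], by nlinarith [ha.2.1]⟩, ?_, ?_⟩
    · nlinarith [ha.2.2]
    · nlinarith [ha.2.1]
  · intro a ha
    simp only [Finset.mem_filter, Finset.mem_Icc] at ha ⊢
    refine ⟨⟨by nlinarith [ha.2.1, ha.2.2], by nlinarith [ha.2.1]⟩, ?_, ?_⟩
    · nlinarith [ha.2.2]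
    · nlinarith [ha.2.1]
  · intro a _; ring
  · intro a _; ring
  · intro a ha
    have := hneg a
    omega

-- double counting: sum over k of k * E k = sum over x of χ x * (B*x / N)
lemma Tswap (N : ℤ) (hN : 1 < N) (χ : ℤ → ℤ)
    (hzero : ∀ a, χ a = 0 ↔ Int.gcd a N ≠ 1)
    (B : ℤ) (hB : 2 ≤ B) (hBN : Int.gcd B N = 1) :
    (∑ k ∈ Finset.Icc (0 : ℤ) (B - 1),
        k * ∑ x ∈ (Finset.Icc (1 : ℤ) N).filter
          (fun x => k * N < B * x ∧ B * x < (k + 1) * N), χ x)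
      = ∑ x ∈ Finset.Icc (1 : ℤ) N, χ x * (B * x / N) := by
  have hN0 : (0:ℤ) < N := by omega
  have hcomm : ∀ k ∈ Finset.Icc (0 : ℤ) (B - 1),
      (k * ∑ x ∈ (Finset.Icc (1 : ℤ) N).filter
        (fun x => k * N < B * x ∧ B * x < (k + 1) * N), χ x)
      = ∑ x ∈ Finset.Icc (1 : ℤ) N,
          if k * N < B * x ∧ B * x < (k + 1) * N then k * χ x else 0 := by
    intro k _
    rw [Finset.mul_sum, Finset.sum_filter]
  rw [Finset.sum_congr rfl hcomm, Finset.sum_comm]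
  refine Finset.sum_congr rfl (fun x hx => ?_)
  simp only [Finset.mem_Icc] at hx
  by_cases hχ : χ x = 0
  · simp [hχ]
  · -- χ x ≠ 0 : x coprime to N, 1 ≤ x ≤ N - 1
    have hxN : Int.gcd x N = 1 := by
      by_contra h; exact hχ ((hzero x).2 h)
    have hxlt : x < N := by
      rcases eq_or_lt_of_le hx.2 with h | h
      · exfalso; apply hχ; rw [h, hzero]
        have : Int.gcd N N = N.natAbs := Int.gcd_self
        omega
      · exact h
    set q := B * x / N with hq
    set r := B * x % N with hr
    have hdm : N * q + r = B * x := by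
      rw [hq, hr]; exact Int.mul_ediv_add_emod (B*x) N
    have hr0 : 0 ≤ r := Int.emod_nonneg _ (by omega)
    have hrN : r < N := Int.emod_lt_of_pos _ hN0
    have hrne : r ≠ 0 := by
      intro h0
      have hdvd : N ∣ B * x := Int.dvd_of_emod_eq_zero h0
      have h1 : IsCoprime B N := Int.isCoprime_iff_gcd_eq_one.2 hBN
      have h2 : IsCoprime x N := Int.isCoprime_iff_gcd_eq_one.2 hxN
      have h3 : IsCoprime (B * x) N := IsCoprime.mul_left h1 h2
      have h4 : IsUnit N := h3.isUnit_of_dvd' hdvd dvd_rfl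
      rw [Int.isUnit_iff] at h4
      omega
    have hq0 : 0 ≤ q := Int.ediv_nonneg (by nlinarith [hx.1]) (by omega)
    have hqB : q ≤ B - 1 := by
      by_contra h
      push_neg at h
      nlinarith [hdm]
    have hiff : ∀ k : ℤ, (k * N < B * x ∧ B * x < (k + 1) * N) ↔ k = q := by
      intro k
      constructor
      · rintro ⟨h1, h2⟩
        have e1 : k * N < (q + 1) * N := by nlinarith
        have e2 : q * N < (k + 1) * N := by nlinarith
        have := (mul_lt_mul_iff_left₀ hN0).1 e1
        have := (mul_lt_mul_iff_left₀ hN0).1 e2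
        omega
      · rintro rfl
        have hrpos : 0 < r := by omega
        constructor
        · calc q * N = N * q := mul_comm _ _
            _ < N * q + r := by linarith
            _ = B * x := hdm
        · calc B * x = N * q + r := hdm.symm
            _ < N * (q + 1) := by linarith
            _ = (q + 1) * N := mul_comm _ _
    calc (∑ k ∈ Finset.Icc (0:ℤ) (B-1),
            if k * N < B * x ∧ B * x < (k + 1) * N then k * χ x else 0)
        = ∑ k ∈ Finset.Icc (0:ℤ) (B-1), if k = q then k * χ x else 0 :=
          Finset.sum_congr rfl (fun k _ => if_congr (hiff k) rfl rfl)
      _ = q * χ x := by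
          rw [Finset.sum_ite_eq' (Finset.Icc (0:ℤ) (B-1)) q (fun k => k * χ x)]
          simp [Finset.mem_Icc, hq0, hqB]
      _ = χ x * q := mul_comm _ _

-- Step D: ∑ χ x * (B*x % N) = χ B * ∑ χ x * x
lemma Dstep (N : ℤ) (hN : 1 < N) (χ : ℤ → ℤ)
    (hval : ∀ a, χ a = 0 ∨ χ a = 1 ∨ χ a = -1)
    (hmul : ∀ a b, χ (a * b) = χ a * χ b)
    (hper : ∀ a b, a ≡ b [ZMOD N] → χ a = χ b)
    (hzero : ∀ a, χ a = 0 ↔ Int.gcd a N ≠ 1)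
    (B : ℤ) (hBN : Int.gcd B N = 1) :
    (∑ x ∈ Finset.Icc (1 : ℤ) N, χ x * (B * x % N))
      = χ B * ∑ x ∈ Finset.Icc (1 : ℤ) N, χ x * x := by
  have hN0 : (0:ℤ) < N := by omega
  have hχB : χ B * χ B = 1 := by
    have hne : χ B ≠ 0 := fun h => (hzero B).1 h hBN
    rcases hval B with h | h | h
    · exact absurd h hne
    · rw [h]; ring
    · rw [h]; ring
  have hχ0 : χ 0 = 0 := by
    rw [hzero]; simp [Int.gcd]; omega
  have hχN : χ N = 0 := by
    rw [hzero, Int.gcd_self]; omega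
  have hpt : ∀ x : ℤ, χ x * (B * x % N) = χ B * (χ (B * x % N) * (B * x % N)) := by
    intro x
    have h1 : χ (B * x % N) = χ B * χ x := by
      rw [hper (B * x % N) (B * x) (Int.emod_emod_of_dvd _ dvd_rfl), hmul]
    rw [h1]
    calc χ x * (B * x % N) = (χ B * χ B) * (χ x * (B * x % N)) := by rw [hχB]; ring
      _ = χ B * (χ B * χ x * (B * x % N)) := by ring
  rw [Finset.sum_congr rfl (fun x _ => hpt x), ← Finset.mul_sum]
  congr 1
  set g : ℤ → ℤ := fun y => χ y * y with hg
  have hg0 : g 0 = 0 := by simp [hg]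
  have hgN : g N = 0 := by simp [hg, hχN]
  have hIcoIcc : ∀ f : ℤ → ℤ, f N = 0 → f 0 = 0 →
      (∑ x ∈ Finset.Icc (1:ℤ) N, f x) = ∑ x ∈ Finset.Ico (0:ℤ) N, f x := by
    intro f hfN hf0
    rw [← Finset.sum_subset (s₁ := Finset.Ico (1:ℤ) N)
        (by intro y hy; simp only [Finset.mem_Ico, Finset.mem_Icc] at hy ⊢; omega)
        (fun y hy hy2 => by
          simp only [Finset.mem_Ico, Finset.mem_Icc] at hy hy2
          have : y = N := by omega
          rw [this, hfN]),
      ← Finset.sum_subset (s₁ := Finset.Ico (1:ℤ) N) (s₂ := Finset.Ico (0:ℤ) N)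
        (by intro y hy; simp only [Finset.mem_Ico] at hy ⊢; omega)
        (fun y hy hy2 => by
          simp only [Finset.mem_Ico] at hy hy2
          have : y = 0 := by omega
          rw [this, hf0])]
  rw [hIcoIcc (fun x => g (B * x % N)) (by simp [hg0]) (by simp [hg0]),
      hIcoIcc g hgN hg0]
  -- bijection x ↦ B*x % N on Ico 0 N
  obtain ⟨u, v, huv⟩ := Int.isCoprime_iff_gcd_eq_one.2 hBN
  have hCB : ∀ a : ℤ, u * (B * a) ≡ a [ZMOD N] :=
    fun a => Int.modEq_iff_dvd.2 ⟨v * a, by linear_combination (-a) * huv⟩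
  refine Finset.sum_nbij' (fun x => B * x % N) (fun y => u * y % N) ?_ ?_ ?_ ?_ ?_
  · intro a _
    simp only [Finset.mem_Ico]
    exact ⟨Int.emod_nonneg _ (by omega), Int.emod_lt_of_pos _ hN0⟩
  · intro a _
    simp only [Finset.mem_Ico]
    exact ⟨Int.emod_nonneg _ (by omega), Int.emod_lt_of_pos _ hN0⟩
  · intro a ha
    simp only [Finset.mem_Ico] at ha
    have h1 : u * (B * a % N) ≡ u * (B * a) [ZMOD N] :=
      Int.ModEq.mul_left u (Int.emod_emod_of_dvd _ dvd_rfl)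
    have h2 : u * (B * a % N) ≡ a [ZMOD N] := h1.trans (hCB a)
    have h3 : u * (B * a % N) % N = a % N := h2
    show u * (B * a % N) % N = a
    rw [h3, Int.emod_eq_of_lt ha.1 ha.2]
  · intro a ha
    simp only [Finset.mem_Ico] at ha
    have h1 : B * (u * a % N) ≡ B * (u * a) [ZMOD N] :=
      Int.ModEq.mul_left B (Int.emod_emod_of_dvd _ dvd_rfl)
    have h2 : B * (u * a) ≡ a [ZMOD N] := by
      have := hCB a
      calc B * (u * a) = u * (B * a) := by ring
        _ ≡ a [ZMOD N] := hCB a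
    have h3 : B * (u * a % N) % N = a % N := h1.trans h2
    show B * (u * a % N) % N = a
    rw [h3, Int.emod_eq_of_lt ha.1 ha.2]
  · intro a _
    rfl

lemma revsum (f : ℤ → ℤ) (a b c : ℤ) :
    ∑ k ∈ Finset.Ico a b, f k = ∑ j ∈ Finset.Ico (c - b + 1) (c - a + 1), f (c - j) := by
  refine Finset.sum_nbij' (fun k => c - k) (fun j => c - j) ?_ ?_ ?_ ?_ ?_
  · intro x hx; simp only [Finset.mem_Ico] at hx ⊢; omega
  · intro x hx; simp only [Finset.mem_Ico] at hx ⊢; omega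
  · intro x _; ring
  · intro x _; ring
  · intro x _; rw [show c - (c - x) = x by ring]

lemma Astep (B : ℤ) (hB : 2 ≤ B) (E : ℤ → ℤ)
    (hsym : ∀ k, 0 ≤ k → k ≤ B - 1 → E (B - 1 - k) = - E k) :
    ∑ k ∈ Finset.Icc (0:ℤ) (B / 2 - 1), (B - 1 - 2 * k) * E k
      = - ∑ k ∈ Finset.Icc (0:ℤ) (B - 1), k * E k := by
  set m : ℤ := B / 2 with hmdef
  have hm : 2 * m = B ∨ 2 * m + 1 = B := by omega
  have hm1 : 1 ≤ m := by omega
  have e1 : Finset.Icc (0:ℤ) (B / 2 - 1) = Finset.Ico (0:ℤ) m := by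
    ext x; simp only [Finset.mem_Icc, Finset.mem_Ico]; omega
  have e2 : Finset.Icc (0:ℤ) (B - 1) = Finset.Ico (0:ℤ) B := by
    ext x; simp only [Finset.mem_Icc, Finset.mem_Ico]; omega
  rw [e1, e2]
  set g : ℤ → ℤ := fun k => (B - 1 - 2 * k) * E k with hg
  set T : ℤ := ∑ k ∈ Finset.Ico (0:ℤ) B, k * E k with hT
  -- h1 : sum of g over [0,B) = -2T
  have hrev1 : ∑ k ∈ Finset.Ico (0:ℤ) B, (B - 1 - k) * E k = - T := by
    rw [revsum (fun k => (B - 1 - k) * E k) 0 B (B - 1)]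
    rw [show B - 1 - B + 1 = 0 by ring, show B - 1 - 0 + 1 = B by ring]
    rw [hT, ← Finset.sum_neg_distrib]
    refine Finset.sum_congr rfl (fun j hj => ?_)
    simp only [Finset.mem_Ico] at hj
    rw [hsym j hj.1 (by omega)]
    ring
  have h1 : ∑ k ∈ Finset.Ico (0:ℤ) B, g k = - 2 * T := by
    have : ∀ k ∈ Finset.Ico (0:ℤ) B, g k = (B - 1 - k) * E k - k * E k := by
      intro k _; simp only [hg]; ring
    rw [Finset.sum_congr rfl this, Finset.sum_sub_distrib, hrev1, hT]
    ring
  -- h2 : split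
  have h2 : ∑ k ∈ Finset.Ico (0:ℤ) B, g k
      = (∑ k ∈ Finset.Ico (0:ℤ) m, g k) + ∑ k ∈ Finset.Ico m B, g k := by
    rw [← Finset.sum_union (Finset.Ico_disjoint_Ico_consecutive 0 m B),
        Finset.Ico_union_Ico_eq_Ico (by omega) (by omega)]
  -- h3 : reflect upper half
  have hgsym : ∀ j, 0 ≤ j → j ≤ B - 1 → g (B - 1 - j) = g j := by
    intro j h0 h1'
    simp only [hg]
    rw [hsym j h0 h1']
    ring
  have h3 : ∑ k ∈ Finset.Ico m B, g k = ∑ j ∈ Finset.Ico (0:ℤ) (B - m), g j := by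
    rw [revsum g m B (B - 1), show B - 1 - B + 1 = 0 by ring,
        show B - 1 - m + 1 = B - m by ring]
    refine Finset.sum_congr rfl (fun j hj => ?_)
    simp only [Finset.mem_Ico] at hj
    rw [show B - 1 - j = B - 1 - j by rfl]
    exact hgsym j hj.1 (by omega)
  -- h4 : upper half sum equals lower half sum
  have h4 : ∑ j ∈ Finset.Ico (0:ℤ) (B - m), g j = ∑ k ∈ Finset.Ico (0:ℤ) m, g k := by
    rcases hm with hm | hm
    · rw [show B - m = m by omega]
    · rw [show B - m = m + 1 by omega,
          ← Finset.Ico_union_Ico_eq_Ico (show (0:ℤ) ≤ m by omega) (show m ≤ m + 1 by omega),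
          Finset.sum_union (Finset.Ico_disjoint_Ico_consecutive 0 m (m+1))]
      have hsing : Finset.Ico m (m+1) = {m} := by
        ext x; simp only [Finset.mem_Ico, Finset.mem_singleton]; omega
      rw [hsing, Finset.sum_singleton]
      have : g m = 0 := by
        simp only [hg]; rw [show B - 1 - 2 * m = 0 by omega]; ring
      rw [this, add_zero]
  linarith [h1, h2, h3, h4]

/-- `E_k(B) = Σ χ(x)`, the sum of `χ(x)` over all integers `x` with
`kN/B < x < (k+1)N/B` (for `0 ≤ k ≤ B−1` these integers all lie in `[1, N]`,
and the inequalities are rewritten as `kN < Bx` and `Bx < (k+1)N`). -/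
noncomputable def Esum (N : ℤ) (χ : ℤ → ℤ) (B k : ℤ) : ℤ :=
  ∑ x ∈ (Finset.Icc (1 : ℤ) N).filter (fun x => k * N < B * x ∧ B * x < (k + 1) * N), χ x

/-- `h = −(1/N)·Σ_{x=1}^{N} χ(x)·x`, the class number expression. -/
noncomputable def hcl (N : ℤ) (χ : ℤ → ℤ) : ℚ :=
  -(1 / (N : ℚ)) * ∑ x ∈ Finset.Icc (1 : ℤ) N, (χ x : ℚ) * (x : ℚ)

/-- Theorem 2, first part:
`Σ_{k=0}^{⌊B/2⌋−1} (B − 1 − 2k)·E_k(B) = (B − χ(B))·h`. -/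
theorem Esum_class_number_formula (N : ℤ) (hN : 1 < N) (χ : ℤ → ℤ)
    (hval : ∀ a, χ a = 0 ∨ χ a = 1 ∨ χ a = -1)
    (hmul : ∀ a b, χ (a * b) = χ a * χ b)
    (hper : ∀ a b, a ≡ b [ZMOD N] → χ a = χ b)
    (hzero : ∀ a, χ a = 0 ↔ Int.gcd a N ≠ 1)
    (hodd : χ (-1) = -1)
    (B : ℤ) (hB : 2 ≤ B) (hBN : Int.gcd B N = 1) :
    (((∑ k ∈ Finset.Icc (0 : ℤ) (B / 2 - 1), (B - 1 - 2 * k) * Esum N χ B k) : ℤ) : ℚ) =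
      ((B : ℚ) - (χ B : ℚ)) * hcl N χ := by
  have hN0 : (0:ℤ) < N := by omega
  -- χ (N - x) = - χ x
  have hneg : ∀ x, χ (N - x) = - χ x := by
    intro x
    have h1 : χ (N - x) = χ (-1 * x) := by
      refine hper _ _ ?_
      have : (N:ℤ) ∣ (-1 * x) - (N - x) := ⟨-1, by ring⟩
      exact (Int.modEq_iff_dvd.2 this)
    rw [h1, hmul, hodd]; ring
  -- symmetry of Esum
  have hsym : ∀ k, 0 ≤ k → k ≤ B - 1 → Esum N χ B (B - 1 - k) = - Esum N χ B k := by
    intro k h0 h1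
    simp only [Esum]
    exact Esym N hN χ hneg B k h0 h1
  -- step A
  have hA : ∑ k ∈ Finset.Icc (0:ℤ) (B / 2 - 1), (B - 1 - 2 * k) * Esum N χ B k
      = - ∑ k ∈ Finset.Icc (0:ℤ) (B - 1), k * Esum N χ B k :=
    Astep B hB (fun k => Esum N χ B k) hsym
  -- double counting
  have hTs : (∑ k ∈ Finset.Icc (0:ℤ) (B - 1), k * Esum N χ B k)
      = ∑ x ∈ Finset.Icc (1:ℤ) N, χ x * (B * x / N) := by
    simp only [Esum]
    exact Tswap N hN χ hzero B hB hBN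
  set Sx : ℤ := ∑ x ∈ Finset.Icc (1:ℤ) N, χ x * x with hSx
  -- multiply by N
  have hNT : N * (∑ k ∈ Finset.Icc (0:ℤ) (B - 1), k * Esum N χ B k)
      = B * Sx - χ B * Sx := by
    rw [hTs, Finset.mul_sum]
    have hpt : ∀ x ∈ Finset.Icc (1:ℤ) N,
        N * (χ x * (B * x / N)) = χ x * (B * x) - χ x * (B * x % N) := by
      intro x _
      have := Int.mul_ediv_add_emod (B * x) N
      linear_combination (χ x) * this
    rw [Finset.sum_congr rfl hpt, Finset.sum_sub_distrib,
        Dstep N hN χ hval hmul hper hzero B hBN]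
    have : (∑ x ∈ Finset.Icc (1:ℤ) N, χ x * (B * x)) = B * Sx := by
      rw [hSx, Finset.mul_sum]
      exact Finset.sum_congr rfl (fun x _ => by ring)
    rw [this, hSx]
  -- the integer identity
  have hint : N * (∑ k ∈ Finset.Icc (0:ℤ) (B / 2 - 1), (B - 1 - 2 * k) * Esum N χ B k)
      = (χ B - B) * Sx := by
    rw [hA]
    linear_combination -hNT
  -- pass to ℚ
  have hcast := congrArg (fun z : ℤ => (z : ℚ)) hint
  push_cast at hcast
  have hNQ : (N : ℚ) ≠ 0 := by positivity
  rw [hcl]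
  have hSQ : ((Sx : ℤ) : ℚ) = ∑ x ∈ Finset.Icc (1:ℤ) N, (χ x : ℚ) * (x : ℚ) := by
    rw [hSx]; push_cast; ring
  field_simp
  push_cast at hSQ ⊢
  linear_combination hcast - ((B:ℚ) - (χ B : ℚ)) * hSQ
end

section
/- Let N > 1, let χ be an odd real Dirichlet character modulo N, and let B ≥ 2 be an integer with gcd(B, N) = 1 admitting a factorization B = B₁·B₂ with 1 < B₁ < B. Then Σ_{k=0}^{⌊B₁/2⌋−1} (B₁ − 1 − 2k)·Σ_{j=0}^{B₂−1} E_{k·B₂+j}(B) = (B₁ − χ(B₁))·h. -/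
lemma ediv_eq_iff' {N a : ℤ} (k : ℤ) (hN : 0 < N) (hnd : ¬ (N ∣ a)) :
    (k * N < a ∧ a < (k + 1) * N) ↔ a / N = k := by
  have h1 := Int.mul_ediv_add_emod a N
  have h2 : a % N ≠ 0 := fun h => hnd (Int.dvd_of_emod_eq_zero h)
  have h3 := Int.emod_nonneg a (ne_of_gt hN)
  have h4 := Int.emod_lt_of_pos a hN
  have h5 : 0 < a % N := lt_of_le_of_ne h3 (Ne.symm h2)
  constructor
  · rintro ⟨l, r⟩
    have hle : k ≤ a / N := (Int.le_ediv_iff_mul_le hN).2 l.le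
    have hlt : a / N < k + 1 := (Int.ediv_lt_iff_lt_mul hN).2 r
    omega
  · rintro rfl
    constructor <;> [linarith [mul_comm (a / N) N]; linarith [mul_comm (a / N + 1) N, mul_add N (a/N) 1]]

lemma fold_sum (B : ℤ) (hB : 2 ≤ B) (F : ℤ → ℤ)
    (hrefl : ∀ k, 0 ≤ k → k ≤ B - 1 → F (B - 1 - k) = F k)
    (hmid : B % 2 = 1 → F (B / 2) = 0) :
    ∑ k ∈ Finset.Icc (0:ℤ) (B - 1), F k = 2 * ∑ k ∈ Finset.Icc (0:ℤ) (B / 2 - 1), F k := by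
  have hsplit : Finset.Icc (0:ℤ) (B - 1)
      = Finset.Icc (0:ℤ) (B / 2 - 1) ∪ Finset.Icc (B / 2) (B - 1) := by
    ext x; simp only [Finset.mem_Icc, Finset.mem_union]; omega
  have hdisj : Disjoint (Finset.Icc (0:ℤ) (B / 2 - 1)) (Finset.Icc (B / 2) (B - 1)) := by
    rw [Finset.disjoint_left]; intro a ha hb
    simp only [Finset.mem_Icc] at ha hb; omega
  rw [hsplit, Finset.sum_union hdisj]
  have hsecond : ∑ k ∈ Finset.Icc (B / 2) (B - 1), F k
      = ∑ k ∈ Finset.Icc (0:ℤ) (B - 1 - B / 2), F k := by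
    refine Finset.sum_nbij' (fun k => B - 1 - k) (fun k => B - 1 - k) ?_ ?_ ?_ ?_ ?_
    · intro a ha; simp only [Finset.mem_Icc] at ha ⊢; omega
    · intro a ha; simp only [Finset.mem_Icc] at ha ⊢; omega
    · intro a _; ring
    · intro a _; ring
    · intro a ha
      simp only [Finset.mem_Icc] at ha
      exact (hrefl a (by omega) (by omega)).symm
  rw [hsecond]
  rcases (by omega : B % 2 = 0 ∨ B % 2 = 1) with h | h
  · have : B - 1 - B / 2 = B / 2 - 1 := by omega
    rw [this]; ring
  · have h1 : B - 1 - B / 2 = B / 2 := by omega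
    rw [h1]
    have h2 : Finset.Icc (0:ℤ) (B / 2) = insert (B / 2) (Finset.Icc (0:ℤ) (B / 2 - 1)) := by
      ext x; simp only [Finset.mem_Icc, Finset.mem_insert]; omega
    have h3 : B / 2 ∉ Finset.Icc (0:ℤ) (B / 2 - 1) := by
      simp only [Finset.mem_Icc]; omega
    rw [h2, Finset.sum_insert h3, hmid h]
    ring

section
variable {N : ℤ} {χ : ℤ → ℤ}

lemma chi_sq (hval : ∀ a, χ a = 0 ∨ χ a = 1 ∨ χ a = -1)
    (hzero : ∀ a, χ a = 0 ↔ Int.gcd a N ≠ 1) {a : ℤ} (h : Int.gcd a N = 1) :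
    χ a * χ a = 1 := by
  have h0 : ¬ (χ a = 0) := by rw [hzero]; omega
  rcases hval a with h' | h' | h' <;> simp [h'] at h0 ⊢

lemma not_dvd_of_chi_ne (hN : 1 < N) (hzero : ∀ a, χ a = 0 ↔ Int.gcd a N ≠ 1)
    {B x : ℤ} (hBN : Int.gcd B N = 1) (hx : χ x ≠ 0) : ¬ (N ∣ B * x) := by
  have hxN : Int.gcd x N = 1 := by
    by_contra h; exact hx ((hzero x).2 h)
  have hg : Int.gcd (B * x) N = 1 := by
    rw [Int.gcd, Int.natAbs_mul]
    exact Nat.Coprime.mul hBN hxN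
  intro hdvd
  have h2 : N.natAbs ∣ Int.gcd (B * x) N := Nat.dvd_gcd (Int.natAbs_dvd_natAbs.mpr hdvd) dvd_rfl
  rw [hg] at h2
  have := Nat.le_of_dvd one_pos h2
  omega

lemma Esum_reflect (hN : 1 < N)
    (hper : ∀ a b, a ≡ b [ZMOD N] → χ a = χ b)
    (hmul : ∀ a b, χ (a * b) = χ a * χ b) (hodd : χ (-1) = -1)
    {B k : ℤ} (hB : 2 ≤ B) (hk0 : 0 ≤ k) (hk1 : k ≤ B - 1) :
    Esum N χ B (B - 1 - k) = - Esum N χ B k := by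
  have hN0 : (0:ℤ) < N := by omega
  have hB0 : (0:ℤ) < B := by omega
  have key : ∀ a : ℤ, χ (N - a) = - χ a := by
    intro a
    have h1 : χ (N - a) = χ (-a) := by
      apply hper
      have : N - a ≡ 0 - a [ZMOD N] := Int.ModEq.sub_right a (Int.modEq_zero_iff_dvd.2 dvd_rfl)
      simpa using this
    rw [h1]
    simpa [hodd] using hmul (-1) a
  rw [Esum, Esum, ← Finset.sum_neg_distrib]
  apply Finset.sum_nbij' (fun x => N - x) (fun x => N - x)
  · intro a ha
    simp only [Finset.mem_filter, Finset.mem_Icc] at ha ⊢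
    obtain ⟨⟨ha1, ha2⟩, hc1, hc2⟩ := ha
    have haN : a < N := by
      by_contra h
      have : a = N := by omega
      subst this
      nlinarith
    refine ⟨⟨by omega, by omega⟩, by nlinarith, by nlinarith⟩
  · intro a ha
    simp only [Finset.mem_filter, Finset.mem_Icc] at ha ⊢
    obtain ⟨⟨ha1, ha2⟩, hc1, hc2⟩ := ha
    have haN : a < N := by
      by_contra h
      have : a = N := by omega
      subst this
      nlinarith
    refine ⟨⟨by omega, by omega⟩, by nlinarith, by nlinarith⟩
  · intro a _; ring
  · intro a _; ring
  · intro a _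
    rw [key a]; ring

lemma T_eq (hN : 1 < N) (hzero : ∀ a, χ a = 0 ↔ Int.gcd a N ≠ 1)
    {B : ℤ} (hB : 2 ≤ B) (hBN : Int.gcd B N = 1) :
    ∑ x ∈ Finset.Icc (1:ℤ) N, χ x * (B * x / N)
      = ∑ k ∈ Finset.Icc (0:ℤ) (B - 1), k * Esum N χ B k := by
  have hN0 : (0:ℤ) < N := by omega
  rw [show (∑ k ∈ Finset.Icc (0:ℤ) (B - 1), k * Esum N χ B k)
      = ∑ k ∈ Finset.Icc (0:ℤ) (B - 1), ∑ x ∈ Finset.Icc (1:ℤ) N,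
          if k * N < B * x ∧ B * x < (k + 1) * N then k * χ x else 0 by
    refine Finset.sum_congr rfl fun k _ => ?_
    rw [Esum, Finset.mul_sum, Finset.sum_filter]]
  rw [Finset.sum_comm]
  refine Finset.sum_congr rfl fun x hx => ?_
  by_cases hchi : χ x = 0
  · simp [hchi]
  · have hnd : ¬ (N ∣ B * x) := not_dvd_of_chi_ne hN hzero hBN hchi
    simp only [Finset.mem_Icc] at hx
    set k₀ := B * x / N with hk₀
    have hxN : x < N := by
      rcases eq_or_lt_of_le hx.2 with h | h
      · exfalso; apply hnd; rw [h]; exact ⟨B, (mul_comm B N ▸ rfl)⟩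
      · exact h
    have hk₀0 : 0 ≤ k₀ := Int.ediv_nonneg (by nlinarith) hN0.le
    have hk₀1 : k₀ ≤ B - 1 := by
      have : k₀ < B := (Int.ediv_lt_iff_lt_mul hN0).2 (by nlinarith)
      omega
    have hmem : k₀ ∈ Finset.Icc (0:ℤ) (B - 1) := Finset.mem_Icc.2 ⟨hk₀0, hk₀1⟩
    have : ∀ k, (if k * N < B * x ∧ B * x < (k + 1) * N then k * χ x else 0)
        = if k = k₀ then k * χ x else 0 := by
      intro k
      congr 1
      rw [ediv_eq_iff' k hN0 hnd]
      exact eq_iff_iff.2 ⟨fun h => h.symm, fun h => h.symm⟩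
    rw [Finset.sum_congr rfl fun k _ => this k, Finset.sum_ite_eq' _ k₀ (fun k => k * χ x)]
    simp [hmem, mul_comm]

lemma sum_emod_eq (hN : 1 < N)
    (hval : ∀ a, χ a = 0 ∨ χ a = 1 ∨ χ a = -1)
    (hmul : ∀ a b, χ (a * b) = χ a * χ b)
    (hper : ∀ a b, a ≡ b [ZMOD N] → χ a = χ b)
    (hzero : ∀ a, χ a = 0 ↔ Int.gcd a N ≠ 1)
    {B : ℤ} (hBN : Int.gcd B N = 1) :
    ∑ x ∈ Finset.Icc (1:ℤ) N, χ x * (B * x % N)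
      = χ B * ∑ x ∈ Finset.Icc (1:ℤ) N, χ x * x := by
  have hN0 : (0:ℤ) < N := by omega
  obtain ⟨C, v, hbez⟩ := (Int.isCoprime_iff_gcd_eq_one.mpr hBN)
  have hCB : C * B ≡ 1 [ZMOD N] := by
    unfold Int.ModEq
    rw [← hbez, Int.add_mul_emod_self_right]
  set f : ℤ → ℤ := fun x => (B * x - 1) % N + 1 with hf
  set g : ℤ → ℤ := fun y => (C * y - 1) % N + 1 with hg
  have hfc : ∀ x, f x ≡ B * x [ZMOD N] := by
    intro x
    have h1 : (B * x - 1) % N ≡ B * x - 1 [ZMOD N] := Int.emod_emod_of_dvd _ dvd_rfl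
    simpa using h1.add_right 1
  have hgc : ∀ y, g y ≡ C * y [ZMOD N] := by
    intro y
    have h1 : (C * y - 1) % N ≡ C * y - 1 [ZMOD N] := Int.emod_emod_of_dvd _ dvd_rfl
    simpa using h1.add_right 1
  have hfmem : ∀ x, f x ∈ Finset.Icc (1:ℤ) N := by
    intro x
    have := Int.emod_nonneg (B * x - 1) (ne_of_gt hN0)
    have := Int.emod_lt_of_pos (B * x - 1) hN0
    have hfx : f x = (B * x - 1) % N + 1 := rfl
    simp only [Finset.mem_Icc]; omega
  have hgmem : ∀ y, g y ∈ Finset.Icc (1:ℤ) N := by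
    intro y
    have := Int.emod_nonneg (C * y - 1) (ne_of_gt hN0)
    have := Int.emod_lt_of_pos (C * y - 1) hN0
    have hgy : g y = (C * y - 1) % N + 1 := rfl
    simp only [Finset.mem_Icc]; omega
  have hgf : ∀ x ∈ Finset.Icc (1:ℤ) N, g (f x) = x := by
    intro x hx
    simp only [Finset.mem_Icc] at hx
    have hstep : C * f x ≡ x [ZMOD N] := by
      calc C * f x ≡ C * (B * x) [ZMOD N] := (hfc x).mul_left C
        _ = (C * B) * x := by ring
        _ ≡ 1 * x [ZMOD N] := hCB.mul_right x
        _ = x := by ring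
    have h2 : (C * f x - 1) % N = (x - 1) % N := hstep.sub_right 1
    have h3 : (x - 1) % N = x - 1 := Int.emod_eq_of_lt (by omega) (by omega)
    have hgfx : g (f x) = (C * f x - 1) % N + 1 := rfl
    omega
  have hfg : ∀ y ∈ Finset.Icc (1:ℤ) N, f (g y) = y := by
    intro y hy
    simp only [Finset.mem_Icc] at hy
    have hstep : B * g y ≡ y [ZMOD N] := by
      calc B * g y ≡ B * (C * y) [ZMOD N] := (hgc y).mul_left B
        _ = (C * B) * y := by ring
        _ ≡ 1 * y [ZMOD N] := hCB.mul_right y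
        _ = y := by ring
    have h2 : (B * g y - 1) % N = (y - 1) % N := hstep.sub_right 1
    have h3 : (y - 1) % N = y - 1 := Int.emod_eq_of_lt (by omega) (by omega)
    have hfgy : f (g y) = (B * g y - 1) % N + 1 := rfl
    omega
  have hpt : ∀ x, χ x * (B * x % N) = χ B * (χ (f x) * f x) := by
    intro x
    have hid : χ B * χ (f x) = χ x := by
      rw [hper (f x) (B * x) (hfc x), hmul B x, ← mul_assoc, chi_sq hval hzero hBN, one_mul]
    rw [← mul_assoc, hid]
    by_cases hchi : χ x = 0
    · simp [hchi]
    · have hnd : ¬ (N ∣ B * x) := not_dvd_of_chi_ne hN hzero hBN hchi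
      have hmod : B * x % N ≠ 0 := fun h => hnd (Int.dvd_of_emod_eq_zero h)
      have h3 := Int.emod_nonneg (B * x) (ne_of_gt hN0)
      have h4 := Int.emod_lt_of_pos (B * x) hN0
      have hfx : f x = B * x % N := by
        have e1 : (B * x - 1) % N = (B * x % N - 1 % N) % N := Int.sub_emod _ _ _
        have e2 : (1:ℤ) % N = 1 := Int.emod_eq_of_lt (by omega) (by omega)
        have e3 : (B * x % N - 1) % N = B * x % N - 1 :=
          Int.emod_eq_of_lt (by omega) (by omega)
        rw [e2] at e1
        have hfx : f x = (B * x - 1) % N + 1 := rfl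
        omega
      rw [hfx]
  rw [Finset.sum_congr rfl fun x _ => hpt x, ← Finset.mul_sum]
  congr 1
  exact Finset.sum_nbij' f g (fun x _ => hfmem x) (fun y _ => hgmem y) hgf hfg
    (fun x _ => rfl)

lemma block_sum (hN : 1 < N) (hzero : ∀ a, χ a = 0 ↔ Int.gcd a N ≠ 1)
    {B B₁ B₂ : ℤ} (hB₂ : 0 < B₂) (hfac : B = B₁ * B₂)
    (hBN : Int.gcd B N = 1) (k : ℤ) :
    ∑ j ∈ Finset.Icc (0:ℤ) (B₂ - 1), Esum N χ B (k * B₂ + j) = Esum N χ B₁ k := by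
  have hN0 : (0:ℤ) < N := by omega
  simp only [Esum, Finset.sum_filter]
  rw [Finset.sum_comm]
  refine Finset.sum_congr rfl fun x hx => ?_
  by_cases hchi : χ x = 0
  · simp [hchi]
  · have hnd : ¬ (N ∣ B * x) := not_dvd_of_chi_ne hN hzero hBN hchi
    by_cases hQ : k * N < B₁ * x ∧ B₁ * x < (k + 1) * N
    · set j₀ := B * x / N - k * B₂ with hj₀
      have hq1 : k * B₂ ≤ B * x / N := by
        rw [Int.le_ediv_iff_mul_le hN0, hfac]
        have := mul_lt_mul_of_pos_right hQ.1 hB₂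
        nlinarith [this]
      have hq2 : B * x / N < (k + 1) * B₂ := by
        rw [Int.ediv_lt_iff_lt_mul hN0, hfac]
        have := mul_lt_mul_of_pos_right hQ.2 hB₂
        nlinarith [this]
      have hj₀mem : j₀ ∈ Finset.Icc (0:ℤ) (B₂ - 1) := by
        simp only [Finset.mem_Icc]
        constructor <;> nlinarith [hq1, hq2]
      have hcond : ∀ j, ((k * B₂ + j) * N < B * x ∧ B * x < (k * B₂ + j + 1) * N) ↔ j = j₀ := by
        intro j
        rw [ediv_eq_iff' (k * B₂ + j) hN0 hnd]
        omega
      have : ∀ j, (if (k * B₂ + j) * N < B * x ∧ B * x < (k * B₂ + j + 1) * N then χ x else 0)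
          = if j = j₀ then χ x else 0 := by
        intro j; congr 1; exact eq_iff_iff.2 (hcond j)
      rw [Finset.sum_congr rfl fun j _ => this j, Finset.sum_ite_eq' _ j₀ (fun _ => χ x)]
      simp [hj₀mem, hQ]
    · have hnone : ∀ j ∈ Finset.Icc (0:ℤ) (B₂ - 1),
          ¬ ((k * B₂ + j) * N < B * x ∧ B * x < (k * B₂ + j + 1) * N) := by
        intro j hj hP
        simp only [Finset.mem_Icc] at hj
        apply hQ
        constructor
        · have h1 : k * B₂ * N ≤ (k * B₂ + j) * N := by nlinarith [hj.1]
          have h2 : k * B₂ * N < B * x := lt_of_le_of_lt h1 hP.1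
          have h3 : (k * N) * B₂ < (B₁ * x) * B₂ := by
            rw [hfac] at h2; nlinarith [h2]
          exact lt_of_mul_lt_mul_right h3 hB₂.le
        · have h1 : (k * B₂ + j + 1) * N ≤ (k + 1) * B₂ * N := by nlinarith [hj.2]
          have h2 : B * x < (k + 1) * B₂ * N := lt_of_lt_of_le hP.2 h1
          have h3 : (B₁ * x) * B₂ < ((k + 1) * N) * B₂ := by
            rw [hfac] at h2; nlinarith [h2]
          exact lt_of_mul_lt_mul_right h3 hB₂.le
      rw [Finset.sum_congr rfl fun j hj => if_neg (hnone j hj)]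
      simp [hQ]

/-- the class number formula for `E_k(B)` sums. -/
lemma stmt7 (hN : 1 < N)
    (hval : ∀ a, χ a = 0 ∨ χ a = 1 ∨ χ a = -1)
    (hmul : ∀ a b, χ (a * b) = χ a * χ b)
    (hper : ∀ a b, a ≡ b [ZMOD N] → χ a = χ b)
    (hzero : ∀ a, χ a = 0 ↔ Int.gcd a N ≠ 1)
    (hodd : χ (-1) = -1)
    {B : ℤ} (hB : 2 ≤ B) (hBN : Int.gcd B N = 1) :
    ((∑ k ∈ Finset.Icc (0 : ℤ) (B / 2 - 1), (B - 1 - 2 * k) * Esum N χ B k : ℤ) : ℚ)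
      = ((B : ℚ) - (χ B : ℚ)) * hcl N χ := by
  have hN0 : (0:ℤ) < N := by omega
  set M : ℤ := ∑ x ∈ Finset.Icc (1:ℤ) N, χ x * x with hM
  set T : ℤ := ∑ x ∈ Finset.Icc (1:ℤ) N, χ x * (B * x / N) with hT
  set S : ℤ := ∑ k ∈ Finset.Icc (0 : ℤ) (B / 2 - 1), (B - 1 - 2 * k) * Esum N χ B k with hS
  set U : ℤ := ∑ k ∈ Finset.Icc (0 : ℤ) (B - 1), k * Esum N χ B k with hU
  -- key1 : B * M = N * T + χ B * M
  have key1 : B * M = N * T + χ B * M := by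
    have pt : ∀ x ∈ Finset.Icc (1:ℤ) N,
        B * (χ x * x) = N * (χ x * (B * x / N)) + χ x * (B * x % N) := by
      intro x _
      linear_combination (-χ x) * (Int.mul_ediv_add_emod (B * x) N)
    calc B * M = ∑ x ∈ Finset.Icc (1:ℤ) N, B * (χ x * x) := by
          rw [hM, Finset.mul_sum]
      _ = ∑ x ∈ Finset.Icc (1:ℤ) N,
            (N * (χ x * (B * x / N)) + χ x * (B * x % N)) := Finset.sum_congr rfl pt
      _ = N * T + ∑ x ∈ Finset.Icc (1:ℤ) N, χ x * (B * x % N) := by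
          rw [Finset.sum_add_distrib, hT, Finset.mul_sum]
      _ = N * T + χ B * M := by
          rw [sum_emod_eq hN hval hmul hper hzero hBN, hM]
  -- T = U
  have key2 : T = U := T_eq hN hzero hB hBN
  -- reflection
  have hrefl : ∀ k, 0 ≤ k → k ≤ B - 1 → Esum N χ B (B - 1 - k) = - Esum N χ B k :=
    fun k hk0 hk1 => Esum_reflect hN hper hmul hodd hB hk0 hk1
  -- sum of all E_k is zero
  have sumE : ∑ k ∈ Finset.Icc (0:ℤ) (B - 1), Esum N χ B k = 0 := by
    have h : ∑ k ∈ Finset.Icc (0:ℤ) (B - 1), Esum N χ B k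
        = ∑ k ∈ Finset.Icc (0:ℤ) (B - 1), (- Esum N χ B k) := by
      refine Finset.sum_nbij' (fun k => B - 1 - k) (fun k => B - 1 - k) ?_ ?_ ?_ ?_ ?_
      · intro a ha; simp only [Finset.mem_Icc] at ha ⊢; omega
      · intro a ha; simp only [Finset.mem_Icc] at ha ⊢; omega
      · intro a _; ring
      · intro a _; ring
      · intro a ha
        simp only [Finset.mem_Icc] at ha
        have := hrefl a ha.1 ha.2
        linarith
    rw [Finset.sum_neg_distrib] at h
    linarith
  -- fold
  have hfold : ∑ k ∈ Finset.Icc (0:ℤ) (B - 1), (B - 1 - 2 * k) * Esum N χ B k = 2 * S := by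
    rw [hS]
    refine fold_sum B hB (fun k => (B - 1 - 2 * k) * Esum N χ B k) ?_ ?_
    · intro k hk0 hk1
      show (B - 1 - 2 * (B - 1 - k)) * Esum N χ B (B - 1 - k) = (B - 1 - 2 * k) * Esum N χ B k
      rw [hrefl k hk0 hk1]
      ring
    · intro hodd2
      show (B - 1 - 2 * (B / 2)) * Esum N χ B (B / 2) = 0
      have : B - 1 - 2 * (B / 2) = 0 := by omega
      rw [this, zero_mul]
  -- full sum expansion
  have hfull : ∑ k ∈ Finset.Icc (0:ℤ) (B - 1), (B - 1 - 2 * k) * Esum N χ B k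
      = (B - 1) * (∑ k ∈ Finset.Icc (0:ℤ) (B - 1), Esum N χ B k) - 2 * U := by
    rw [hU, Finset.mul_sum, Finset.mul_sum, ← Finset.sum_sub_distrib]
    exact Finset.sum_congr rfl fun k _ => by ring
  have hSU : S = - U := by
    rw [sumE] at hfull
    rw [hfull] at hfold
    linarith
  have hST : S = - T := by rw [hSU, key2]
  -- now the rational computation
  have hNQ : (N:ℚ) ≠ 0 := by
    exact_mod_cast (by omega : N ≠ 0)
  have hclM : hcl N χ = -(1 / (N:ℚ)) * (M : ℚ) := by
    rw [hcl, hM]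
    congr 1
    push_cast
    rfl
  have key1Q : (B:ℚ) * (M:ℚ) = (N:ℚ) * (T:ℚ) + (χ B : ℚ) * (M:ℚ) := by
    exact_mod_cast congrArg (Int.cast : ℤ → ℚ) key1
  rw [hclM]
  have hSQ : ((S:ℤ):ℚ) = -((T:ℤ):ℚ) := by exact_mod_cast congrArg (Int.cast : ℤ → ℚ) hST
  rw [hSQ]
  field_simp
  linarith [key1Q]

end

/-- Theorem 2, second part: if `B = B₁·B₂` with `1 < B₁ < B`, then
`Σ_{k=0}^{⌊B₁/2⌋−1} (B₁ − 1 − 2k)·Σ_{j=0}^{B₂−1} E_{kB₂+j}(B) = (B₁ − χ(B₁))·h`. -/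
theorem Esum_class_number_formula_factor (N : ℤ) (hN : 1 < N) (χ : ℤ → ℤ)
    (hval : ∀ a, χ a = 0 ∨ χ a = 1 ∨ χ a = -1)
    (hmul : ∀ a b, χ (a * b) = χ a * χ b)
    (hper : ∀ a b, a ≡ b [ZMOD N] → χ a = χ b)
    (hzero : ∀ a, χ a = 0 ↔ Int.gcd a N ≠ 1)
    (hodd : χ (-1) = -1)
    (B : ℤ) (hB : 2 ≤ B) (hBN : Int.gcd B N = 1)
    (B₁ B₂ : ℤ) (hfac : B = B₁ * B₂) (hB₁1 : 1 < B₁) (hB₁B : B₁ < B) :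
    (((∑ k ∈ Finset.Icc (0 : ℤ) (B₁ / 2 - 1),
          (B₁ - 1 - 2 * k) * ∑ j ∈ Finset.Icc (0 : ℤ) (B₂ - 1), Esum N χ B (k * B₂ + j)) : ℤ) : ℚ) =
      ((B₁ : ℚ) - (χ B₁ : ℚ)) * hcl N χ := by
  have hB₂pos : 0 < B₂ := by nlinarith
  have hB₁N : Int.gcd B₁ N = 1 := by
    have hdvd : B₁.natAbs ∣ B.natAbs := by
      rw [hfac, Int.natAbs_mul]
      exact Dvd.intro _ rfl
    exact Nat.Coprime.coprime_dvd_left hdvd hBN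
  have hblock : ∀ k : ℤ,
      ∑ j ∈ Finset.Icc (0:ℤ) (B₂ - 1), Esum N χ B (k * B₂ + j) = Esum N χ B₁ k :=
    block_sum hN hzero hB₂pos hfac hBN
  rw [show (∑ k ∈ Finset.Icc (0 : ℤ) (B₁ / 2 - 1),
        (B₁ - 1 - 2 * k) * ∑ j ∈ Finset.Icc (0 : ℤ) (B₂ - 1), Esum N χ B (k * B₂ + j))
      = ∑ k ∈ Finset.Icc (0 : ℤ) (B₁ / 2 - 1), (B₁ - 1 - 2 * k) * Esum N χ B₁ k from
    Finset.sum_congr rfl fun k _ => by rw [hblock k]]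
  exact stmt7 hN hval hmul hper hzero hodd (by omega) hB₁N
end

section
/- Let m be a squarefree integer with m < −4 and m ≡ 1 (mod 4), N = |m|, and χ(x) = (x/N) the Jacobi symbol. Then Σ_{0 < x < N/2} χ(x) = (2 − χ(2))·h; explicitly, Σ_{0 < x < N/2} χ(x) = h if N ≡ 7 (mod 8), and Σ_{0 < x < N/2} χ(x) = 3h if N ≡ 3 (mod 8). -/
open Finset

lemma chi_reflect (n : ℕ) (hn4 : n % 4 = 3) (x : ℤ) :
    jacobiSym ((n:ℤ) - x) n = - jacobiSym x n := by
  have hodd : Odd n := by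
    rcases Nat.even_or_odd n with h | h
    · exfalso; rcases h with ⟨k, hk⟩; omega
    · exact h
  have h1 : ((n:ℤ) - x) % n = (-x) % n := by
    have h2 := Int.add_mul_emod_self_left (a := -x) (b := (n:ℤ)) (c := 1)
    rw [show (n:ℤ) - x = -x + (n:ℤ) * 1 by ring, h2]
  rw [jacobiSym.mod_left' h1, jacobiSym.neg x hodd, ZMod.χ₄_nat_three_mod_four hn4,
    neg_one_mul]

lemma sum_reflect (n : ℕ) (p : ℤ → Prop) [DecidablePred p] (f : ℤ → ℤ) :
    ∑ x ∈ (Finset.Ico (1:ℤ) (n:ℤ)).filter p, f x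
      = ∑ x ∈ (Finset.Ico (1:ℤ) (n:ℤ)).filter (fun y => p ((n:ℤ) - y)), f ((n:ℤ) - x) := by
  refine Finset.sum_nbij' (fun x => (n:ℤ) - x) (fun y => (n:ℤ) - y) ?_ ?_ ?_ ?_ ?_
  · intro a ha
    simp only [Finset.mem_filter, Finset.mem_Ico] at ha ⊢
    refine ⟨⟨by omega, by omega⟩, ?_⟩
    have h : (n:ℤ) - ((n:ℤ) - a) = a := by ring
    rw [h]; exact ha.2
  · intro a ha
    simp only [Finset.mem_filter, Finset.mem_Ico] at ha ⊢
    exact ⟨⟨by omega, by omega⟩, ha.2⟩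
  · intro a _; show (n:ℤ) - ((n:ℤ) - a) = a; ring
  · intro a _; show (n:ℤ) - ((n:ℤ) - a) = a; ring
  · intro a _; show f a = f ((n:ℤ) - ((n:ℤ) - a)); congr 1; ring

lemma sum_even_eq (n : ℕ) (f : ℤ → ℤ) :
    ∑ x ∈ (Finset.Ico (1:ℤ) (n:ℤ)).filter (fun x => x % 2 = 0), f x
      = ∑ y ∈ (Finset.Ico (1:ℤ) (n:ℤ)).filter (fun y => 2 * y < (n:ℤ)), f (2 * y) := by
  refine (Finset.sum_nbij' (fun y => 2 * y) (fun x => x / 2) ?_ ?_ ?_ ?_ ?_).symm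
  · intro a ha
    simp only [Finset.mem_filter, Finset.mem_Ico] at ha ⊢
    omega
  · intro a ha
    simp only [Finset.mem_filter, Finset.mem_Ico] at ha ⊢
    omega
  · intro a _; show 2 * a / 2 = a; omega
  · intro a ha
    simp only [Finset.mem_filter, Finset.mem_Ico] at ha
    show 2 * (a / 2) = a; omega
  · intro a _; rfl

lemma key_identity (n : ℕ) (hn4 : n % 4 = 3) (hn : 5 ≤ n) :
    ((2:ℤ) - jacobiSym 2 n) * (∑ x ∈ Finset.Ico (1:ℤ) (n:ℤ), jacobiSym x n * x)
      = -(n:ℤ) * ∑ x ∈ (Finset.Ico (1:ℤ) (n:ℤ)).filter (fun x => 2 * x < (n:ℤ)),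
          jacobiSym x n := by
  have hodd : n % 2 = 1 := by omega
  have hoddZ : ((n:ℤ)) % 2 = 1 := by omega
  set c : ℤ := jacobiSym 2 n with hc
  set T : ℤ := ∑ x ∈ (Finset.Ico (1:ℤ) (n:ℤ)).filter (fun x => 2 * x < (n:ℤ)),
      jacobiSym x n with hTdef
  set S1 : ℤ := ∑ x ∈ (Finset.Ico (1:ℤ) (n:ℤ)).filter (fun x => 2 * x < (n:ℤ)),
      jacobiSym x n * x with hS1def
  set S : ℤ := ∑ x ∈ Finset.Ico (1:ℤ) (n:ℤ), jacobiSym x n * x with hSdef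
  -- Identity A : S = 2 * S1 - n * T
  have hsetA : (Finset.Ico (1:ℤ) (n:ℤ)).filter (fun y => ¬ 2 * ((n:ℤ) - y) < (n:ℤ))
      = (Finset.Ico (1:ℤ) (n:ℤ)).filter (fun y => 2 * y < (n:ℤ)) := by
    ext y; simp only [Finset.mem_filter, Finset.mem_Ico, not_lt]; omega
  have hrest : ∑ x ∈ (Finset.Ico (1:ℤ) (n:ℤ)).filter (fun x => ¬ 2 * x < (n:ℤ)),
      jacobiSym x n * x
      = ∑ y ∈ (Finset.Ico (1:ℤ) (n:ℤ)).filter (fun y => 2 * y < (n:ℤ)),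
          (jacobiSym y n * y - (n:ℤ) * jacobiSym y n) := by
    rw [sum_reflect n (fun x => ¬ 2 * x < (n:ℤ)) (fun x => jacobiSym x n * x), hsetA]
    refine Finset.sum_congr rfl ?_
    intro y _
    rw [chi_reflect n hn4 y]; ring
  have hA : S = 2 * S1 - (n:ℤ) * T := by
    rw [hSdef, ← Finset.sum_filter_add_sum_filter_not (Finset.Ico (1:ℤ) (n:ℤ))
      (fun x => 2 * x < (n:ℤ)) (fun x => jacobiSym x n * x), hrest,
      Finset.sum_sub_distrib, ← Finset.mul_sum, ← hS1def, ← hTdef]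
    ring
  -- even sums
  have heven : ∑ x ∈ (Finset.Ico (1:ℤ) (n:ℤ)).filter (fun x => x % 2 = 0),
      jacobiSym x n * x = 2 * c * S1 := by
    rw [sum_even_eq n (fun x => jacobiSym x n * x)]
    have h : ∀ y ∈ (Finset.Ico (1:ℤ) (n:ℤ)).filter (fun y => 2 * y < (n:ℤ)),
        jacobiSym (2 * y) n * (2 * y) = 2 * c * (jacobiSym y n * y) := by
      intro y _; rw [jacobiSym.mul_left]; ring
    rw [Finset.sum_congr rfl h, ← Finset.mul_sum, ← hS1def]
  have hevenχ : ∑ x ∈ (Finset.Ico (1:ℤ) (n:ℤ)).filter (fun x => x % 2 = 0),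
      jacobiSym x n = c * T := by
    rw [sum_even_eq n (fun x => jacobiSym x n)]
    have h : ∀ y ∈ (Finset.Ico (1:ℤ) (n:ℤ)).filter (fun y => 2 * y < (n:ℤ)),
        jacobiSym (2 * y) n = c * jacobiSym y n := by
      intro y _; rw [jacobiSym.mul_left]
    rw [Finset.sum_congr rfl h, ← Finset.mul_sum, ← hTdef]
  -- odd part via reflection onto evens
  have hsetB : (Finset.Ico (1:ℤ) (n:ℤ)).filter (fun y => ¬ ((n:ℤ) - y) % 2 = 0)
      = (Finset.Ico (1:ℤ) (n:ℤ)).filter (fun y => y % 2 = 0) := by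
    ext y; simp only [Finset.mem_filter, Finset.mem_Ico]; omega
  have hoddpart : ∑ x ∈ (Finset.Ico (1:ℤ) (n:ℤ)).filter (fun x => ¬ x % 2 = 0),
      jacobiSym x n * x = 2 * c * S1 - (n:ℤ) * (c * T) := by
    rw [sum_reflect n (fun x => ¬ x % 2 = 0) (fun x => jacobiSym x n * x), hsetB]
    have h : ∀ y ∈ (Finset.Ico (1:ℤ) (n:ℤ)).filter (fun y => y % 2 = 0),
        jacobiSym ((n:ℤ) - y) n * ((n:ℤ) - y)
          = jacobiSym y n * y - (n:ℤ) * jacobiSym y n := by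
      intro y _; rw [chi_reflect n hn4 y]; ring
    rw [Finset.sum_congr rfl h, Finset.sum_sub_distrib, ← Finset.mul_sum, heven, hevenχ]
  have hB : S = 4 * c * S1 - (n:ℤ) * (c * T) := by
    rw [hSdef, ← Finset.sum_filter_add_sum_filter_not (Finset.Ico (1:ℤ) (n:ℤ))
      (fun x => x % 2 = 0) (fun x => jacobiSym x n * x), heven, hoddpart]
    ring
  -- conclude
  have hg : (2:ℤ).gcd (n:ℤ) = 1 := by
    have : Nat.gcd 2 n = 1 := by
      rw [Nat.gcd_rec, hodd]
      rfl
    simpa [Int.gcd] using this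
  have hsq : c ^ 2 = 1 := by rw [hc]; exact jacobiSym.sq_one hg
  linear_combination 2 * c ^ 2 * hA - c * hB - (2 * S + (n:ℤ) * T) * hsq

/-- `h = −(1/N)·Σ_{x=1}^{N} χ(x)·x` with `N = |m|` and `χ(x) = (x/N)` the
Jacobi symbol. -/
noncomputable def hJ (m : ℤ) : ℚ :=
  -(1 / (m.natAbs : ℚ)) *
    ∑ x ∈ Finset.Icc (1 : ℤ) (m.natAbs : ℤ), (jacobiSym x m.natAbs : ℚ) * (x : ℚ)

/-- `Σ_{0 < x < N/2} χ(x)` with `N = |m|`, `χ(x) = (x/N)`; the condition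
`0 < x < N/2` is rewritten as `1 ≤ x` and `2x < N`. -/
noncomputable def Shalf (m : ℤ) : ℤ :=
  ∑ x ∈ (Finset.Icc (1 : ℤ) (m.natAbs : ℤ)).filter (fun x => 2 * x < (m.natAbs : ℤ)),
    jacobiSym x m.natAbs

/-- for squarefree `m < −4` with `m ≡ 1 (mod 4)` and `N = |m|`,
`Σ_{0<x<N/2} χ(x) = (2 − χ(2))·h`; explicitly it equals `h` if `N ≡ 7 (mod 8)`
and `3h` if `N ≡ 3 (mod 8)`. -/
theorem sum_half_eq (m : ℤ) (hm : m < -4) (hsf : Squarefree m) (hmod : m % 4 = 1) :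
    ((Shalf m : ℤ) : ℚ) = ((2 : ℚ) - (jacobiSym 2 m.natAbs : ℚ)) * hJ m ∧
      (m.natAbs % 8 = 7 → ((Shalf m : ℤ) : ℚ) = hJ m) ∧
      (m.natAbs % 8 = 3 → ((Shalf m : ℤ) : ℚ) = 3 * hJ m) := by
  set n := m.natAbs with hn
  have hn4 : n % 4 = 3 := by omega
  have hn5 : 5 ≤ n := by omega
  have hodd : Odd n := Nat.odd_iff.mpr (by omega)
  set T : ℤ := ∑ x ∈ (Finset.Ico (1:ℤ) (n:ℤ)).filter (fun x => 2 * x < (n:ℤ)),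
      jacobiSym x n with hTdef
  set S : ℤ := ∑ x ∈ Finset.Ico (1:ℤ) (n:ℤ), jacobiSym x n * x with hSdef
  have hShalf : Shalf m = T := by
    rw [hTdef]
    unfold Shalf
    rw [← hn]
    congr 1
    ext x
    simp only [Finset.mem_filter, Finset.mem_Icc, Finset.mem_Ico]
    omega
  have hJn : jacobiSym (n:ℤ) n = 0 := by
    rw [jacobiSym.mod_left, Int.emod_self]
    exact jacobiSym.zero_left (by omega)
  have hIcc : Finset.Icc (1:ℤ) (n:ℤ) = insert (n:ℤ) (Finset.Ico (1:ℤ) (n:ℤ)) := by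
    rw [Finset.Ico_insert_right]
    exact_mod_cast Nat.one_le_iff_ne_zero.mpr (by omega)
  have hJeq : hJ m = -(1/(n:ℚ)) * ((S : ℤ) : ℚ) := by
    unfold hJ
    rw [← hn]
    congr 1
    rw [hIcc, Finset.sum_insert (by simp), hJn]
    push_cast
    rw [hSdef]
    push_cast
    ring
  have key := key_identity n hn4 hn5
  rw [← hTdef, ← hSdef] at key
  have keyQ : ((2:ℚ) - (jacobiSym 2 n : ℚ)) * ((S:ℤ):ℚ) = -(n:ℚ) * ((T:ℤ):ℚ) := by
    exact_mod_cast key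
  have hn0 : (n:ℚ) ≠ 0 := Nat.cast_ne_zero.mpr (by omega)
  have part1 : ((Shalf m : ℤ) : ℚ) = ((2:ℚ) - (jacobiSym 2 n : ℚ)) * hJ m := by
    rw [hShalf, hJeq]
    field_simp
    linear_combination keyQ
  refine ⟨part1, fun h8 => ?_, fun h8 => ?_⟩
  · have hc : jacobiSym 2 n = 1 := by
      rw [jacobiSym.at_two hodd, ZMod.χ₈_nat_mod_eight, h8]; decide
    rw [part1, hc]; push_cast; ring
  · have hc : jacobiSym 2 n = -1 := by
      rw [jacobiSym.at_two hodd, ZMod.χ₈_nat_mod_eight, h8]; decide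
    rw [part1, hc]; push_cast; ring
end

section
/- Let m be a squarefree integer with m < −4, m ≡ 1 (mod 4) and m not divisible by 3, N = |m|, and χ(x) = (x/N) the Jacobi symbol. Set E_k(6) := Σ χ(x) over integers x with kN/6 < x < (k+1)N/6, for k = 0, 1, 2. Then: if N ≡ 23 (mod 24), then E₀(6) = h, E₁(6) = 0, E₂(6) = 0; if N ≡ 11 (mod 24), then E₀(6) = h, E₁(6) = 0, E₂(6) = 2h; if N ≡ 7 (mod 24), then E₀(6) = h, E₁(6) = h, E₂(6) = −h; if N ≡ 19 (mod 24), then E₀(6) = −h, E₁(6) = 3h, E₂(6) = h. -/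
/-- `E_k(B) = Σ χ(x)` over integers `x` with `kN/B < x < (k+1)N/B`, where
`N = |m|` and `χ(x) = (x/N)` is the Jacobi symbol (the inequalities are
rewritten as `kN < Bx` and `Bx < (k+1)N`). -/
noncomputable def EJ (m : ℤ) (B k : ℤ) : ℤ :=
  ∑ x ∈ (Finset.Icc (1 : ℤ) (m.natAbs : ℤ)).filter
      (fun x => k * (m.natAbs : ℤ) < B * x ∧ B * x < (k + 1) * (m.natAbs : ℤ)),
    jacobiSym x m.natAbs

open Finset

namespace SixAux

/-- First moment of the Jacobi character. -/
noncomputable def SJ (N : ℕ) : ℤ := ∑ x ∈ Finset.Icc (1 : ℤ) (N : ℤ), jacobiSym x N * x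

/-- Generic partial character sum. -/
noncomputable def EF (N : ℕ) (B k : ℤ) : ℤ :=
  ∑ x ∈ (Finset.Icc (1 : ℤ) (N : ℤ)).filter
      (fun x => k * (N : ℤ) < B * x ∧ B * x < (k + 1) * (N : ℤ)),
    jacobiSym x N

variable {N : ℕ}

lemma chiN (hN : 1 < N) : jacobiSym (N : ℤ) N = 0 := by
  rw [jacobiSym.mod_left]
  simp [jacobiSym.zero_left hN]

lemma chi0 (hN : 1 < N) : jacobiSym (0 : ℤ) N = 0 := jacobiSym.zero_left hN

lemma sum_shift (hN : 1 < N) (f : ℤ → ℤ) (h0 : f 0 = 0) (hn : f (N : ℤ) = 0) :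
    ∑ x ∈ Finset.Icc (1 : ℤ) (N : ℤ), f x = ∑ x ∈ Finset.Ico (0 : ℤ) (N : ℤ), f x := by
  have hN1 : (1 : ℤ) < (N : ℤ) := by exact_mod_cast hN
  have h1 : Finset.Ico (0 : ℤ) (N : ℤ) = insert 0 (Finset.Ico (1 : ℤ) (N : ℤ)) := by
    ext x; simp only [Finset.mem_Ico, Finset.mem_insert]; omega
  have h2 : Finset.Icc (1 : ℤ) (N : ℤ) = insert (N : ℤ) (Finset.Ico (1 : ℤ) (N : ℤ)) := by
    ext x; simp only [Finset.mem_Ico, Finset.mem_insert, Finset.mem_Icc]; omega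
  rw [h1, h2, Finset.sum_insert (by simp), Finset.sum_insert (by simp)]
  rw [h0, hn]

lemma reindex (hN : 1 < N) (c : ℤ) (hc : IsCoprime c (N : ℤ)) (w : ℤ → ℤ) :
    ∑ x ∈ Finset.Icc (1 : ℤ) (N : ℤ),
        jacobiSym (c * x % (N : ℤ)) N * w (c * x % (N : ℤ))
      = ∑ x ∈ Finset.Icc (1 : ℤ) (N : ℤ), jacobiSym x N * w x := by
  have hn0 : (0 : ℤ) < (N : ℤ) := by exact_mod_cast Nat.zero_lt_of_lt hN
  obtain ⟨d, e, hde⟩ := hc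
  rw [sum_shift hN _ (by simp [chi0 hN]) ?hb1, sum_shift hN _ (by simp [chi0 hN]) ?hb2]
  case hb1 =>
    have : c * (N : ℤ) % (N : ℤ) = 0 := by rw [mul_comm]; exact Int.mul_emod_right _ _
    simp [this, chi0 hN]
  case hb2 => simp [chiN hN]
  refine Finset.sum_nbij' (fun x => c * x % (N : ℤ)) (fun y => d * y % (N : ℤ))
    ?_ ?_ ?_ ?_ ?_
  · intro a ha
    rw [Finset.mem_Ico] at ha ⊢
    exact ⟨Int.emod_nonneg _ (ne_of_gt hn0), Int.emod_lt_of_pos _ hn0⟩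
  · intro a ha
    rw [Finset.mem_Ico] at ha ⊢
    exact ⟨Int.emod_nonneg _ (ne_of_gt hn0), Int.emod_lt_of_pos _ hn0⟩
  · intro a ha
    rw [Finset.mem_Ico] at ha
    show d * (c * a % (N : ℤ)) % (N : ℤ) = a
    conv_lhs => rw [Int.mul_emod, Int.emod_emod_of_dvd _ dvd_rfl, ← Int.mul_emod]
    rw [show d * (c * a) = a + (N : ℤ) * (-(e * a)) by linear_combination a * hde]
    rw [Int.add_mul_emod_self_left ..]
    exact Int.emod_eq_of_lt ha.1 ha.2
  · intro a ha
    rw [Finset.mem_Ico] at ha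
    show c * (d * a % (N : ℤ)) % (N : ℤ) = a
    conv_lhs => rw [Int.mul_emod, Int.emod_emod_of_dvd _ dvd_rfl, ← Int.mul_emod]
    rw [show c * (d * a) = a + (N : ℤ) * (-(e * a)) by linear_combination a * hde]
    rw [Int.add_mul_emod_self_left ..]
    exact Int.emod_eq_of_lt ha.1 ha.2
  · intro a _
    rfl

lemma twist (hN : 1 < N) (c : ℤ) (hc : IsCoprime c (N : ℤ)) (w : ℤ → ℤ) :
    ∑ x ∈ Finset.Icc (1 : ℤ) (N : ℤ), jacobiSym x N * w (c * x % (N : ℤ))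
      = jacobiSym c N * ∑ x ∈ Finset.Icc (1 : ℤ) (N : ℤ), jacobiSym x N * w x := by
  have hgcd : c.gcd (N : ℤ) = 1 := Int.isCoprime_iff_gcd_eq_one.mp hc
  have hsq : jacobiSym c N * jacobiSym c N = 1 := by
    have := jacobiSym.sq_one (a := c) (b := N) hgcd
    nlinarith [this]
  have hmul : ∀ x : ℤ, jacobiSym (c * x % (N : ℤ)) N = jacobiSym c N * jacobiSym x N := by
    intro x
    rw [← jacobiSym.mod_left, jacobiSym.mul_left]
  calc
    ∑ x ∈ Finset.Icc (1 : ℤ) (N : ℤ), jacobiSym x N * w (c * x % (N : ℤ))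
        = ∑ x ∈ Finset.Icc (1 : ℤ) (N : ℤ),
            jacobiSym c N * (jacobiSym (c * x % (N : ℤ)) N * w (c * x % (N : ℤ))) := by
          refine Finset.sum_congr rfl fun x _ => ?_
          rw [hmul x, show jacobiSym c N * (jacobiSym c N * jacobiSym x N * w (c * x % (N:ℤ)))
            = (jacobiSym c N * jacobiSym c N) * (jacobiSym x N * w (c * x % (N:ℤ))) by ring,
            hsq, one_mul]
    _ = jacobiSym c N * ∑ x ∈ Finset.Icc (1 : ℤ) (N : ℤ),
          jacobiSym (c * x % (N : ℤ)) N * w (c * x % (N : ℤ)) := by rw [Finset.mul_sum]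
    _ = _ := by rw [reindex hN c hc w]


lemma floor_eq (hN : 1 < N) (c : ℤ) (hc : IsCoprime c (N : ℤ)) :
    (N : ℤ) * ∑ x ∈ Finset.Icc (1 : ℤ) (N : ℤ), jacobiSym x N * (c * x / (N : ℤ))
      = (c - jacobiSym c N) * SJ N := by
  have h := twist hN c hc id
  simp only [id] at h
  have h2 : ∑ x ∈ Finset.Icc (1 : ℤ) (N : ℤ), jacobiSym x N * (c * x % (N : ℤ))
      = c * SJ N - (N : ℤ) * ∑ x ∈ Finset.Icc (1 : ℤ) (N : ℤ),
          jacobiSym x N * (c * x / (N : ℤ)) := by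
    rw [SJ, Finset.mul_sum, Finset.mul_sum, ← Finset.sum_sub_distrib]
    refine Finset.sum_congr rfl fun x _ => ?_
    rw [Int.emod_def]
    ring
  rw [h2, ← SJ] at h
  linarith [h]

lemma chi_neg_one (h5 : 5 ≤ N) (hN4 : N % 4 = 3) : jacobiSym (-1) N = -1 := by
  rw [jacobiSym.at_neg_one (Nat.odd_iff.mpr (by omega)), ZMod.χ₄_nat_eq_if_mod_four]
  have h2 : N % 2 = 1 := by omega
  simp [h2, hN4]

lemma sumzero (h5 : 5 ≤ N) (hN4 : N % 4 = 3) :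
    ∑ x ∈ Finset.Icc (1 : ℤ) (N : ℤ), jacobiSym x N = 0 := by
  have hN : 1 < N := by omega
  have hc : IsCoprime (-1 : ℤ) (N : ℤ) := ⟨-1, 0, by ring⟩
  have h := twist hN (-1) hc (fun _ => 1)
  simp only [mul_one] at h
  rw [chi_neg_one h5 hN4] at h
  linarith [h]

lemma chi_sub (h5 : 5 ≤ N) (hN4 : N % 4 = 3) (x : ℤ) :
    jacobiSym ((N : ℤ) - x) N = - jacobiSym x N := by
  have h1 : ((N : ℤ) - x) % (N : ℤ) = (-1 * x) % (N : ℤ) := by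
    conv_lhs => rw [show (N : ℤ) - x = -1 * x + (N : ℤ) * 1 by ring]
    rw [Int.add_mul_emod_self_left ..]
  rw [jacobiSym.mod_left' h1, jacobiSym.mul_left, chi_neg_one h5 hN4]
  ring

lemma part (h5 : 5 ≤ N) (B : ℤ) (hB : 0 < B) (hc : IsCoprime (N : ℤ) B) (f : ℤ → ℤ) :
    ∑ x ∈ Finset.Icc (1 : ℤ) ((N : ℤ) - 1), jacobiSym x N * f (B * x / (N : ℤ))
      = ∑ k ∈ Finset.Ico (0 : ℤ) B, (EF N B k) * f k := by
  have hn0 : (0 : ℤ) < (N : ℤ) := by exact_mod_cast (by omega : 0 < N)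
  have hmaps : ∀ x ∈ Finset.Icc (1 : ℤ) ((N : ℤ) - 1),
      B * x / (N : ℤ) ∈ Finset.Ico (0 : ℤ) B := by
    intro x hx
    rw [Finset.mem_Icc] at hx
    rw [Finset.mem_Ico]
    constructor
    · exact Int.ediv_nonneg (by nlinarith) hn0.le
    · rw [Int.ediv_lt_iff_lt_mul hn0]
      nlinarith [mul_le_mul_of_nonneg_left hx.2 hB.le]
  rw [← Finset.sum_fiberwise_of_maps_to hmaps
    (fun x => jacobiSym x N * f (B * x / (N : ℤ)))]
  refine Finset.sum_congr rfl fun k hk => ?_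
  rw [Finset.mem_Ico] at hk
  have hset : (Finset.Icc (1 : ℤ) ((N : ℤ) - 1)).filter (fun x => B * x / (N : ℤ) = k)
      = (Finset.Icc (1 : ℤ) (N : ℤ)).filter
          (fun x => k * (N : ℤ) < B * x ∧ B * x < (k + 1) * (N : ℤ)) := by
    ext x
    simp only [Finset.mem_filter, Finset.mem_Icc]
    constructor
    · rintro ⟨⟨hx1, hx2⟩, hfl⟩
      have h1 : k * (N : ℤ) ≤ B * x := (Int.le_ediv_iff_mul_le hn0).mp hfl.ge
      have h2 : B * x < (k + 1) * (N : ℤ) := by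
        rw [← Int.ediv_lt_iff_lt_mul hn0, hfl]; omega
      refine ⟨⟨hx1, by omega⟩, ?_, h2⟩
      rcases lt_or_eq_of_le h1 with h | h
      · exact h
      · exfalso
        have hdvd : (N : ℤ) ∣ B * x := ⟨k, by linarith [h]⟩
        have hdx : (N : ℤ) ∣ x := hc.dvd_of_dvd_mul_left hdvd
        have := Int.le_of_dvd (by omega) hdx
        omega
    · rintro ⟨⟨hx1, hx2⟩, h1, h2⟩
      have e1 : (k + 1) * (N : ℤ) ≤ B * (N : ℤ) :=
        mul_le_mul_of_nonneg_right (by omega) hn0.le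
      have e2 : B * x < B * (N : ℤ) := lt_of_lt_of_le h2 e1
      have hxlt : x < (N : ℤ) := lt_of_mul_lt_mul_left e2 hB.le
      refine ⟨⟨hx1, by omega⟩, ?_⟩
      have g1 : k ≤ B * x / (N : ℤ) := (Int.le_ediv_iff_mul_le hn0).mpr h1.le
      have g2 : B * x / (N : ℤ) < k + 1 := (Int.ediv_lt_iff_lt_mul hn0).mpr h2
      omega
  calc
    ∑ x ∈ (Finset.Icc (1 : ℤ) ((N : ℤ) - 1)).filter (fun x => B * x / (N : ℤ) = k),
        jacobiSym x N * f (B * x / (N : ℤ))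
      = ∑ x ∈ (Finset.Icc (1 : ℤ) ((N : ℤ) - 1)).filter (fun x => B * x / (N : ℤ) = k),
          jacobiSym x N * f k := by
        refine Finset.sum_congr rfl fun x hx => ?_
        rw [(Finset.mem_filter.mp hx).2]
    _ = (∑ x ∈ (Finset.Icc (1 : ℤ) ((N : ℤ) - 1)).filter
          (fun x => B * x / (N : ℤ) = k), jacobiSym x N) * f k := by
        rw [Finset.sum_mul]
    _ = EF N B k * f k := by rw [hset]; rfl

lemma part' (h5 : 5 ≤ N) (B : ℤ) (hB : 0 < B) (hc : IsCoprime (N : ℤ) B) (f : ℤ → ℤ) :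
    ∑ x ∈ Finset.Icc (1 : ℤ) (N : ℤ), jacobiSym x N * f (B * x / (N : ℤ))
      = ∑ k ∈ Finset.Ico (0 : ℤ) B, (EF N B k) * f k := by
  have hN : 1 < N := by omega
  have h2 : Finset.Icc (1 : ℤ) (N : ℤ)
      = insert (N : ℤ) (Finset.Icc (1 : ℤ) ((N : ℤ) - 1)) := by
    ext x
    simp only [Finset.mem_Icc, Finset.mem_insert]
    omega
  rw [h2, Finset.sum_insert (by simp), chiN hN, zero_mul, zero_add, part h5 B hB hc f]

lemma key_floor (h5 : 5 ≤ N) (B : ℤ) (hB : 0 < B) (hc : IsCoprime B (N : ℤ)) :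
    (N : ℤ) * (∑ k ∈ Finset.Ico (0 : ℤ) B, EF N B k * k) = (B - jacobiSym B N) * SJ N := by
  have h := part' h5 B hB hc.symm id
  simp only [id] at h
  rw [← h]
  exact floor_eq (by omega) B hc

lemma key_sum (h5 : 5 ≤ N) (hN4 : N % 4 = 3) (B : ℤ) (hB : 0 < B)
    (hc : IsCoprime B (N : ℤ)) :
    ∑ k ∈ Finset.Ico (0 : ℤ) B, EF N B k = 0 := by
  have h := part' h5 B hB hc.symm (fun _ => 1)
  simp only [mul_one] at h
  rw [← h]
  exact sumzero h5 hN4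

lemma Esym (h5 : 5 ≤ N) (hN4 : N % 4 = 3) (B k : ℤ) (hB : 0 < B) (hk : 0 ≤ k)
    (hkB : k < B) :
    EF N B (B - 1 - k) = - EF N B k := by
  have hn0 : (0 : ℤ) < (N : ℤ) := by exact_mod_cast (by omega : 0 < N)
  rw [EF, EF, ← Finset.sum_neg_distrib]
  refine Finset.sum_nbij' (fun x => (N : ℤ) - x) (fun y => (N : ℤ) - y) ?_ ?_ ?_ ?_ ?_
  · intro a ha
    simp only [Finset.mem_filter, Finset.mem_Icc] at ha ⊢
    obtain ⟨⟨ha1, ha2⟩, hl, hr⟩ := ha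
    have q1 : B * ((N : ℤ) - a) = B * (N : ℤ) - B * a := by ring
    have q2 : (B - 1 - k) * (N : ℤ) = B * (N : ℤ) - (N : ℤ) - k * (N : ℤ) := by ring
    have q3 : (B - 1 - k + 1) * (N : ℤ) = B * (N : ℤ) - k * (N : ℤ) := by ring
    have q4 : (k + 1) * (N : ℤ) = k * (N : ℤ) + (N : ℤ) := by ring
    have hkn : 0 ≤ k * (N : ℤ) := mul_nonneg hk hn0.le
    have halt : a < (N : ℤ) := by
      have : B * a < B * (N : ℤ) := by linarith
      exact lt_of_mul_lt_mul_left this hB.le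
    refine ⟨⟨by omega, by omega⟩, by linarith, by linarith⟩
  · intro a ha
    simp only [Finset.mem_filter, Finset.mem_Icc] at ha ⊢
    obtain ⟨⟨ha1, ha2⟩, hl, hr⟩ := ha
    have q1 : B * ((N : ℤ) - a) = B * (N : ℤ) - B * a := by ring
    have q2 : (B - 1 - k) * (N : ℤ) = B * (N : ℤ) - (N : ℤ) - k * (N : ℤ) := by ring
    have q3 : (B - 1 - k + 1) * (N : ℤ) = B * (N : ℤ) - k * (N : ℤ) := by ring
    have q4 : (k + 1) * (N : ℤ) = k * (N : ℤ) + (N : ℤ) := by ring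
    have hkB' : (k + 1) * (N : ℤ) ≤ B * (N : ℤ) :=
      mul_le_mul_of_nonneg_right (by omega) hn0.le
    have halt : a < (N : ℤ) := by
      have : B * a < B * (N : ℤ) := by linarith
      exact lt_of_mul_lt_mul_left this hB.le
    refine ⟨⟨by omega, by omega⟩, by linarith, by linarith⟩
  · intro a _
    ring
  · intro a _
    ring
  · intro a _
    show jacobiSym a N = -(jacobiSym ((N : ℤ) - a) N)
    rw [chi_sub h5 hN4]
    ring


lemma link (h5 : 5 ≤ N) (hodd : N % 2 = 1) (h3 : N % 3 ≠ 0) :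
    EF N 2 0 = EF N 6 0 + EF N 6 1 + EF N 6 2 ∧ EF N 3 0 = EF N 6 0 + EF N 6 1 := by
  have hodd' : (N : ℤ) % 2 = 1 := by omega
  have h3' : (N : ℤ) % 3 ≠ 0 := by omega
  constructor
  · simp only [EF, Finset.sum_filter, ← Finset.sum_add_distrib]
    refine Finset.sum_congr rfl fun x hx => ?_
    have hx' := Finset.mem_Icc.mp hx
    split_ifs <;> first | ring1 | (exfalso; omega)
  · simp only [EF, Finset.sum_filter, ← Finset.sum_add_distrib]
    refine Finset.sum_congr rfl fun x hx => ?_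
    have hx' := Finset.mem_Icc.mp hx
    split_ifs <;> first | ring1 | (exfalso; omega)

lemma chi2_val (hodd : N % 2 = 1) :
    jacobiSym 2 N = if N % 8 = 1 ∨ N % 8 = 7 then 1 else -1 := by
  rw [jacobiSym.at_two (Nat.odd_iff.mpr hodd), ZMod.χ₈_nat_eq_if_mod_eight]
  simp [hodd]

lemma j23 : jacobiSym 2 3 = -1 := by
  rw [jacobiSym.at_two (by decide), ZMod.χ₈_nat_eq_if_mod_eight]; norm_num

lemma chi3_one (hN4 : N % 4 = 3) (h31 : N % 3 = 1) : jacobiSym 3 N = -1 := by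
  have h := jacobiSym.quadratic_reciprocity_three_mod_four (a := 3) (b := N)
    (by norm_num) hN4
  have h2 : jacobiSym (N : ℤ) 3 = 1 := by
    rw [jacobiSym.mod_left (N : ℤ) 3, show ((N : ℤ) % ((3:ℕ):ℤ)) = 1 by push_cast; omega]
    exact jacobiSym.one_left 3
  rw [show ((3:ℕ):ℤ) = (3:ℤ) by norm_num] at h
  rw [h, h2]

lemma chi3_two (hN4 : N % 4 = 3) (h32 : N % 3 = 2) : jacobiSym 3 N = 1 := by
  have h := jacobiSym.quadratic_reciprocity_three_mod_four (a := 3) (b := N)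
    (by norm_num) hN4
  have h2 : jacobiSym (N : ℤ) 3 = -1 := by
    rw [jacobiSym.mod_left (N : ℤ) 3, show ((N : ℤ) % ((3:ℕ):ℤ)) = 2 by push_cast; omega]
    exact j23
  rw [show ((3:ℕ):ℤ) = (3:ℤ) by norm_num] at h
  rw [h, h2]
  norm_num

lemma master (h5 : 5 ≤ N) (hN4 : N % 4 = 3) (h3 : N % 3 ≠ 0)
    (s2 s3 : ℤ) (hs2 : jacobiSym 2 N = s2) (hs3 : jacobiSym 3 N = s3) :
    2 * ((N:ℤ) * EF N 6 0) = (s2*s3 - s2 - s3 - 1) * SJ N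
    ∧ 2 * ((N:ℤ) * EF N 6 1) = (s2 + 2*s3 - s2*s3 - 2) * SJ N
    ∧ 2 * ((N:ℤ) * EF N 6 2) = (2*s2 - s3 - 1) * SJ N := by
  have hodd : N % 2 = 1 := by omega
  have hd2 : ¬ ((2:ℤ) ∣ (N:ℤ)) := by omega
  have hd3 : ¬ ((3:ℤ) ∣ (N:ℤ)) := by omega
  have hc2 : IsCoprime (2:ℤ) (N:ℤ) := Int.prime_two.coprime_iff_not_dvd.mpr hd2
  have hc3 : IsCoprime (3:ℤ) (N:ℤ) := Int.prime_three.coprime_iff_not_dvd.mpr hd3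
  have hc6 : IsCoprime (6:ℤ) (N:ℤ) := by
    rw [show (6:ℤ) = 2*3 by norm_num]
    exact IsCoprime.mul_left hc2 hc3
  have hs6 : jacobiSym 6 N = s2 * s3 := by
    rw [show (6:ℤ) = 2*3 by norm_num, jacobiSym.mul_left, hs2, hs3]
  have K2f := key_floor h5 2 (by norm_num) hc2
  have K2s := key_sum h5 hN4 2 (by norm_num) hc2
  have K3f := key_floor h5 3 (by norm_num) hc3
  have K3s := key_sum h5 hN4 3 (by norm_num) hc3
  have K6f := key_floor h5 6 (by norm_num) hc6
  rw [hs2] at K2f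
  rw [hs3] at K3f
  rw [hs6] at K6f
  have hI2 : Finset.Ico (0:ℤ) 2 = {0, 1} := by decide
  have hI3 : Finset.Ico (0:ℤ) 3 = {0, 1, 2} := by decide
  have hI6 : Finset.Ico (0:ℤ) 6 = {0, 1, 2, 3, 4, 5} := by decide
  rw [hI2] at K2f K2s
  rw [hI3] at K3f K3s
  rw [hI6] at K6f
  norm_num [Finset.sum_insert, Finset.mem_insert, Finset.mem_singleton,
    Finset.sum_singleton] at K2f K2s K3f K3s K6f
  have S30 : EF N 3 2 = - EF N 3 0 := by
    have := Esym h5 hN4 3 0 (by norm_num) le_rfl (by norm_num)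
    norm_num at this
    exact this
  have S63 : EF N 6 3 = - EF N 6 2 := by
    have := Esym h5 hN4 6 2 (by norm_num) (by norm_num) (by norm_num)
    norm_num at this
    exact this
  have S64 : EF N 6 4 = - EF N 6 1 := by
    have := Esym h5 hN4 6 1 (by norm_num) (by norm_num) (by norm_num)
    norm_num at this
    exact this
  have S65 : EF N 6 5 = - EF N 6 0 := by
    have := Esym h5 hN4 6 0 (by norm_num) le_rfl (by norm_num)
    norm_num at this
    exact this
  obtain ⟨L2, L3⟩ := link h5 hodd h3
  -- multiply the linear relations by N
  have M1 : (N:ℤ) * EF N 2 0 + (N:ℤ) * EF N 2 1 = 0 := by linear_combination (N:ℤ) * K2s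
  have M2 : (N:ℤ) * EF N 3 0 + (N:ℤ) * EF N 3 1 + (N:ℤ) * EF N 3 2 = 0 := by
    linear_combination (N:ℤ) * K3s
  have M3 : (N:ℤ) * EF N 3 2 = -((N:ℤ) * EF N 3 0) := by linear_combination (N:ℤ) * S30
  have M4 : (N:ℤ) * EF N 6 3 = -((N:ℤ) * EF N 6 2) := by linear_combination (N:ℤ) * S63
  have M5 : (N:ℤ) * EF N 6 4 = -((N:ℤ) * EF N 6 1) := by linear_combination (N:ℤ) * S64
  have M6 : (N:ℤ) * EF N 6 5 = -((N:ℤ) * EF N 6 0) := by linear_combination (N:ℤ) * S65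
  have M7 : (N:ℤ) * EF N 2 0
      = (N:ℤ) * EF N 6 0 + (N:ℤ) * EF N 6 1 + (N:ℤ) * EF N 6 2 := by
    linear_combination (N:ℤ) * L2
  have M8 : (N:ℤ) * EF N 3 0 = (N:ℤ) * EF N 6 0 + (N:ℤ) * EF N 6 1 := by
    linear_combination (N:ℤ) * L3
  refine ⟨?_, ?_, ?_⟩ <;> linarith [K2f, K3f, K6f, M1, M2, M3, M4, M5, M6, M7, M8]


lemma cast_helper (m : ℤ) (e d : ℤ) (c : ℚ) (h5 : 5 ≤ m.natAbs)
    (hz : (m.natAbs : ℤ) * e = d * SJ m.natAbs) (hcd : c = -(d : ℚ)) :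
    ((e : ℤ) : ℚ) = c * hJ m := by
  have hNq : ((m.natAbs : ℚ)) ≠ 0 := Nat.cast_ne_zero.mpr (by omega)
  have hq : hJ m = -(SJ m.natAbs : ℚ) / (m.natAbs : ℚ) := by
    unfold hJ SJ
    push_cast
    ring
  have hzq : ((m.natAbs : ℚ)) * (e : ℚ) = (d : ℚ) * (SJ m.natAbs : ℚ) := by
    have := congrArg (fun z : ℤ => (z : ℚ)) hz
    simpa only [Int.cast_mul, Int.cast_natCast] using this
  rw [hq, hcd,
    show ((e : ℤ) : ℚ) = ((m.natAbs : ℚ) * (e : ℚ)) / (m.natAbs : ℚ) from by field_simp,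
    hzq]
  field_simp

end SixAux

/-- Theorem 4.2: for squarefree `m < −4`, `m ≡ 1 (mod 4)`,
`3 ∤ m`, `N = |m|`, the values of `E₀(6), E₁(6), E₂(6)` according to
`N mod 24`. -/
theorem sixths_distribution (m : ℤ) (hm : m < -4) (hsf : Squarefree m)
    (hmod : m % 4 = 1) (h3 : ¬ (3 ∣ m)) :
    (m.natAbs % 24 = 23 →
        ((EJ m 6 0 : ℤ) : ℚ) = hJ m ∧ EJ m 6 1 = 0 ∧ EJ m 6 2 = 0) ∧
      (m.natAbs % 24 = 11 →
        ((EJ m 6 0 : ℤ) : ℚ) = hJ m ∧ EJ m 6 1 = 0 ∧ ((EJ m 6 2 : ℤ) : ℚ) = 2 * hJ m) ∧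
      (m.natAbs % 24 = 7 →
        ((EJ m 6 0 : ℤ) : ℚ) = hJ m ∧ ((EJ m 6 1 : ℤ) : ℚ) = hJ m ∧
          ((EJ m 6 2 : ℤ) : ℚ) = -hJ m) ∧
      (m.natAbs % 24 = 19 →
        ((EJ m 6 0 : ℤ) : ℚ) = -hJ m ∧ ((EJ m 6 1 : ℤ) : ℚ) = 3 * hJ m ∧
          ((EJ m 6 2 : ℤ) : ℚ) = hJ m) := by
  have h5 : 5 ≤ m.natAbs := by omega
  have hN4 : m.natAbs % 4 = 3 := by omega
  have h3' : m.natAbs % 3 ≠ 0 := by omega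
  have hne : ((m.natAbs : ℤ)) ≠ 0 := by omega
  refine ⟨fun h24 => ?_, fun h24 => ?_, fun h24 => ?_, fun h24 => ?_⟩
  · -- N ≡ 23 (mod 24): χ(2) = 1, χ(3) = 1
    have hs2 : jacobiSym 2 m.natAbs = 1 := by
      rw [SixAux.chi2_val (by omega)]
      simp [show m.natAbs % 8 = 7 by omega]
    have hs3 : jacobiSym 3 m.natAbs = 1 := SixAux.chi3_two hN4 (by omega)
    obtain ⟨A0, A1, A2⟩ := SixAux.master h5 hN4 h3' 1 1 hs2 hs3
    refine ⟨?_, ?_, ?_⟩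
    · rw [← one_mul (hJ m)]
      exact SixAux.cast_helper m (SixAux.EF m.natAbs 6 0) (-1) 1 h5
        (by linarith) (by norm_num)
    · have hz : (m.natAbs : ℤ) * SixAux.EF m.natAbs 6 1 = 0 := by linarith
      rcases mul_eq_zero.mp hz with h | h
      · exact absurd h hne
      · exact h
    · have hz : (m.natAbs : ℤ) * SixAux.EF m.natAbs 6 2 = 0 := by linarith
      rcases mul_eq_zero.mp hz with h | h
      · exact absurd h hne
      · exact h
  · -- N ≡ 11 (mod 24): χ(2) = -1, χ(3) = 1
    have hs2 : jacobiSym 2 m.natAbs = -1 := by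
      rw [SixAux.chi2_val (by omega)]
      simp [show m.natAbs % 8 = 3 by omega]
    have hs3 : jacobiSym 3 m.natAbs = 1 := SixAux.chi3_two hN4 (by omega)
    obtain ⟨A0, A1, A2⟩ := SixAux.master h5 hN4 h3' (-1) 1 hs2 hs3
    refine ⟨?_, ?_, ?_⟩
    · rw [← one_mul (hJ m)]
      exact SixAux.cast_helper m (SixAux.EF m.natAbs 6 0) (-1) 1 h5
        (by linarith) (by norm_num)
    · have hz : (m.natAbs : ℤ) * SixAux.EF m.natAbs 6 1 = 0 := by linarith
      rcases mul_eq_zero.mp hz with h | h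
      · exact absurd h hne
      · exact h
    · exact SixAux.cast_helper m (SixAux.EF m.natAbs 6 2) (-2) 2 h5
        (by linarith) (by norm_num)
  · -- N ≡ 7 (mod 24): χ(2) = 1, χ(3) = -1
    have hs2 : jacobiSym 2 m.natAbs = 1 := by
      rw [SixAux.chi2_val (by omega)]
      simp [show m.natAbs % 8 = 7 by omega]
    have hs3 : jacobiSym 3 m.natAbs = -1 := SixAux.chi3_one hN4 (by omega)
    obtain ⟨A0, A1, A2⟩ := SixAux.master h5 hN4 h3' 1 (-1) hs2 hs3
    refine ⟨?_, ?_, ?_⟩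
    · rw [← one_mul (hJ m)]
      exact SixAux.cast_helper m (SixAux.EF m.natAbs 6 0) (-1) 1 h5
        (by linarith) (by norm_num)
    · rw [← one_mul (hJ m)]
      exact SixAux.cast_helper m (SixAux.EF m.natAbs 6 1) (-1) 1 h5
        (by linarith) (by norm_num)
    · rw [show -hJ m = (-1 : ℚ) * hJ m by ring]
      exact SixAux.cast_helper m (SixAux.EF m.natAbs 6 2) 1 (-1) h5
        (by linarith) (by norm_num)
  · -- N ≡ 19 (mod 24): χ(2) = -1, χ(3) = -1
    have hs2 : jacobiSym 2 m.natAbs = -1 := by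
      rw [SixAux.chi2_val (by omega)]
      simp [show m.natAbs % 8 = 3 by omega]
    have hs3 : jacobiSym 3 m.natAbs = -1 := SixAux.chi3_one hN4 (by omega)
    obtain ⟨A0, A1, A2⟩ := SixAux.master h5 hN4 h3' (-1) (-1) hs2 hs3
    refine ⟨?_, ?_, ?_⟩
    · rw [show -hJ m = (-1 : ℚ) * hJ m by ring]
      exact SixAux.cast_helper m (SixAux.EF m.natAbs 6 0) 1 (-1) h5
        (by linarith) (by norm_num)
    · exact SixAux.cast_helper m (SixAux.EF m.natAbs 6 1) (-3) 3 h5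
        (by linarith) (by norm_num)
    · rw [← one_mul (hJ m)]
      exact SixAux.cast_helper m (SixAux.EF m.natAbs 6 2) (-1) 1 h5
        (by linarith) (by norm_num)
end

section
/- Let m be a squarefree integer with m < −4, m ≡ 1 (mod 4) and m not divisible by 3, N = |m|, and χ(x) = (x/N) the Jacobi symbol. Set E_k := Σ χ(x) over integers x with kN/12 < x < (k+1)N/12, for k = 0, 1, 2, 3, 4, 5, and write E₀ := E_0. Then: if N ≡ 23 (mod 24), then E₁ = h − E₀, E₂ = 0, E₃ = 0, E₄ = h − E₀, E₅ = −h + E₀; if N ≡ 11 (mod 24), then E₁ = h − E₀, E₂ = −h, E₃ = h, E₄ = h − E₀, E₅ = h + E₀; if N ≡ 7 (mod 24), then E₁ = h − E₀, E₂ = 0, E₃ = h, E₄ = −E₀, E₅ = −h + E₀; if N ≡ 19 (mod 24), then E₁ = −h − E₀, E₂ = h, E₃ = 2h, E₄ = 2h − E₀, E₅ = −h + E₀. -/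
lemma chiN (N : ℕ) (hN : 1 < N) : jacobiSym (N:ℤ) N = 0 := by
  rw [jacobiSym.mod_left, Int.emod_self]
  exact jacobiSym.eq_zero_iff.mpr ⟨by omega, by simp [Int.gcd]; omega⟩

lemma emap_mem (N : ℕ) (hN : 1 < N) (d x : ℤ) (hx : x ∈ Finset.Icc (1:ℤ) (N:ℤ)) :
    (if (N:ℤ) ∣ d * x then (N:ℤ) else d * x % (N:ℤ)) ∈ Finset.Icc (1:ℤ) (N:ℤ) := by
  simp only [Finset.mem_Icc] at hx ⊢
  have hN0 : (1:ℤ) < (N:ℤ) := by exact_mod_cast hN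
  split_ifs with h
  · omega
  · have h1 := Int.emod_nonneg (d * x) (by omega : (N:ℤ) ≠ 0)
    have h2 := Int.emod_lt_of_pos (d * x) (by omega : (0:ℤ) < (N:ℤ))
    have h3 : d * x % (N:ℤ) ≠ 0 := fun hc => h (Int.dvd_of_emod_eq_zero hc)
    omega

lemma emap_inv (N : ℕ) (hN : 1 < N) (d d' x : ℤ) (hdd' : (N:ℤ) ∣ d * d' - 1)
    (hx : x ∈ Finset.Icc (1:ℤ) (N:ℤ)) :
    (if (N:ℤ) ∣ d' * (if (N:ℤ) ∣ d * x then (N:ℤ) else d * x % (N:ℤ))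
      then (N:ℤ) else d' * (if (N:ℤ) ∣ d * x then (N:ℤ) else d * x % (N:ℤ)) % (N:ℤ)) = x := by
  simp only [Finset.mem_Icc] at hx
  have hN0 : (1:ℤ) < (N:ℤ) := by exact_mod_cast hN
  by_cases h1 : (N:ℤ) ∣ d * x
  · have hx' : (N:ℤ) ∣ x := by
      have ha : (N:ℤ) ∣ d' * (d * x) := Dvd.dvd.mul_left h1 d'
      have hb : (N:ℤ) ∣ (d * d' - 1) * x := hdd'.mul_right x
      have e : x = d' * (d * x) - (d * d' - 1) * x := by ring
      rw [e]; exact dvd_sub ha hb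
    have hxN : x = (N:ℤ) := le_antisymm hx.2 (Int.le_of_dvd (by omega) hx')
    rw [if_pos h1, if_pos (dvd_mul_left (N:ℤ) d')]
    exact hxN.symm
  · rw [if_neg h1]
    have hxltN : x < (N:ℤ) := by
      rcases eq_or_lt_of_le hx.2 with h | h
      · exfalso; exact h1 (h ▸ (dvd_mul_left (N:ℤ) d))
      · exact h
    have m1 : d' * (d * x % (N:ℤ)) ≡ d' * (d * x) [ZMOD (N:ℤ)] :=
      Int.ModEq.mul_left d' (Int.emod_emod_of_dvd (d * x) dvd_rfl)
    have m2 : d' * (d * x) ≡ x [ZMOD (N:ℤ)] := by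
      have : (N:ℤ) ∣ x - d' * (d * x) := by
        have := hdd'.mul_right x
        have e : x - d' * (d * x) = -((d * d' - 1) * x) := by ring
        rw [e]; exact dvd_neg.mpr this
      exact Int.modEq_iff_dvd.mpr this
    have m3 : d' * (d * x % (N:ℤ)) % (N:ℤ) = x % (N:ℤ) := m1.trans m2
    have hxmod : x % (N:ℤ) = x := Int.emod_eq_of_lt (by omega) hxltN
    have hnd : ¬ (N:ℤ) ∣ d' * (d * x % (N:ℤ)) := by
      intro hdvd
      have h0 := Int.emod_eq_zero_of_dvd hdvd
      rw [m3, hxmod] at h0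
      omega
    rw [if_neg hnd, m3, hxmod]

lemma sum_emod_perm (N : ℕ) (hN : 1 < N) (c : ℤ) (hc : IsCoprime c (N:ℤ))
    (f : ℤ → ℤ) (h0 : f 0 = 0) (hfN : f (N:ℤ) = 0) :
    ∑ x ∈ Finset.Icc (1:ℤ) (N:ℤ), f (c * x % (N:ℤ))
      = ∑ x ∈ Finset.Icc (1:ℤ) (N:ℤ), f x := by
  obtain ⟨u, v, huv⟩ := hc
  have hcu : (N:ℤ) ∣ c * u - 1 := ⟨-v, by linear_combination huv⟩
  have huc : (N:ℤ) ∣ u * c - 1 := ⟨-v, by linear_combination huv⟩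
  refine Finset.sum_nbij' (fun x => if (N:ℤ) ∣ c * x then (N:ℤ) else c * x % (N:ℤ))
      (fun y => if (N:ℤ) ∣ u * y then (N:ℤ) else u * y % (N:ℤ))
      (fun x hx => emap_mem N hN c x hx) (fun y hy => emap_mem N hN u y hy)
      (fun x hx => emap_inv N hN c u x hcu hx)
      (fun y hy => emap_inv N hN u c y huc hy)
      (fun x hx => ?_)
  show f (c * x % (N:ℤ)) = f (if (N:ℤ) ∣ c * x then (N:ℤ) else c * x % (N:ℤ))
  split_ifs with h
  · rw [Int.emod_eq_zero_of_dvd h, h0, hfN]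
  · rfl

lemma key (N : ℕ) (hN : 1 < N) (a : ℤ) (hc : IsCoprime a (N:ℤ)) :
    (N:ℤ) * ∑ x ∈ Finset.Icc (1:ℤ) (N:ℤ), jacobiSym x N * (a * x / (N:ℤ))
      = (a - jacobiSym a N) * ∑ x ∈ Finset.Icc (1:ℤ) (N:ℤ), jacobiSym x N * x := by
  have hgcd : Int.gcd a N = 1 := Int.isCoprime_iff_gcd_eq_one.mp hc
  have hsq : jacobiSym a N * jacobiSym a N = 1 := by
    rcases jacobiSym.trichotomy a N with h | h | h
    · exact absurd (jacobiSym.eq_zero_iff.mp h).2 (by simp [hgcd])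
    · rw [h]; norm_num
    · rw [h]; norm_num
  have hχN : jacobiSym (N:ℤ) N = 0 := chiN N hN
  have hperm : ∑ x ∈ Finset.Icc (1:ℤ) (N:ℤ), jacobiSym (a * x % (N:ℤ)) N * (a * x % (N:ℤ))
      = ∑ x ∈ Finset.Icc (1:ℤ) (N:ℤ), jacobiSym x N * x :=
    sum_emod_perm N hN a hc (fun y => jacobiSym y N * y) (by simp) (by simp [hχN])
  have hA : ∑ x ∈ Finset.Icc (1:ℤ) (N:ℤ), jacobiSym x N * (a * x % (N:ℤ))
      = jacobiSym a N * ∑ x ∈ Finset.Icc (1:ℤ) (N:ℤ), jacobiSym x N * x := by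
    rw [← hperm, Finset.mul_sum]
    refine Finset.sum_congr rfl fun x hx => ?_
    have hmul : jacobiSym (a * x % (N:ℤ)) N = jacobiSym a N * jacobiSym x N := by
      rw [← jacobiSym.mod_left, jacobiSym.mul_left]
    simp only [hmul]
    linear_combination (-(jacobiSym x N * (a * x % (N:ℤ)))) * hsq
  have hsum : ∑ x ∈ Finset.Icc (1:ℤ) (N:ℤ), jacobiSym x N * (a * x)
      = (N:ℤ) * (∑ x ∈ Finset.Icc (1:ℤ) (N:ℤ), jacobiSym x N * (a * x / (N:ℤ)))
        + ∑ x ∈ Finset.Icc (1:ℤ) (N:ℤ), jacobiSym x N * (a * x % (N:ℤ)) := by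
    rw [Finset.mul_sum, ← Finset.sum_add_distrib]
    refine Finset.sum_congr rfl fun x _ => ?_
    linear_combination (-(jacobiSym x N)) * (Int.mul_ediv_add_emod (a * x) (N:ℤ))
  have hC : ∑ x ∈ Finset.Icc (1:ℤ) (N:ℤ), jacobiSym x N * (a * x)
      = a * ∑ x ∈ Finset.Icc (1:ℤ) (N:ℤ), jacobiSym x N * x := by
    rw [Finset.mul_sum]
    exact Finset.sum_congr rfl fun x _ => by ring
  rw [hA, hC] at hsum
  linear_combination -hsum

lemma partition (m : ℤ) (hm : m < -4) (hcop : IsCoprime (12:ℤ) (m.natAbs:ℤ)) (a c : ℤ)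
    (ha : 0 < a) (hc0 : 0 < c) (hac : a * c = 12) :
    ∑ x ∈ Finset.Icc (1:ℤ) (m.natAbs:ℤ), jacobiSym x m.natAbs * (a * x / (m.natAbs:ℤ))
      = ∑ k ∈ Finset.range 12, (((k:ℤ)) / c) * EJ m 12 (k:ℤ) := by
  have hN1 : 1 < m.natAbs := by omega
  have hNZ : (1:ℤ) < (m.natAbs:ℤ) := by exact_mod_cast hN1
  have hmaps : ∀ x ∈ Finset.Icc (1:ℤ) (m.natAbs:ℤ),
      (12 * x / (m.natAbs:ℤ)).toNat ∈ Finset.range 13 := by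
    intro x hx
    simp only [Finset.mem_Icc] at hx
    simp only [Finset.mem_range]
    have h1 : 12 * x / (m.natAbs:ℤ) < 13 := by
      rw [Int.ediv_lt_iff_lt_mul (by omega)]; nlinarith
    have h2 : 0 ≤ 12 * x / (m.natAbs:ℤ) := Int.ediv_nonneg (by omega) (by omega)
    omega
  rw [← Finset.sum_fiberwise_of_maps_to hmaps
    (fun x => jacobiSym x m.natAbs * (a * x / (m.natAbs:ℤ)))]
  rw [Finset.sum_range_succ]
  have hfib12 : (Finset.Icc (1:ℤ) (m.natAbs:ℤ)).filter
      (fun x => (12 * x / (m.natAbs:ℤ)).toNat = 12) = {(m.natAbs:ℤ)} := by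
    ext x
    simp only [Finset.mem_filter, Finset.mem_Icc, Finset.mem_singleton]
    constructor
    · rintro ⟨⟨h1, h2⟩, h3⟩
      have hd0 : 0 ≤ 12 * x / (m.natAbs:ℤ) := Int.ediv_nonneg (by omega) (by omega)
      have heq : 12 * x / (m.natAbs:ℤ) = 12 := by
        rw [← Int.toNat_of_nonneg hd0, h3]; rfl
      have h4 : (12:ℤ) ≤ 12 * x / (m.natAbs:ℤ) := le_of_eq heq.symm
      rw [Int.le_ediv_iff_mul_le (by omega)] at h4
      nlinarith
    · rintro rfl
      refine ⟨⟨by omega, le_rfl⟩, ?_⟩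
      rw [Int.mul_ediv_cancel _ (by omega : (m.natAbs:ℤ) ≠ 0)]
      rfl
  rw [hfib12, Finset.sum_singleton, chiN m.natAbs hN1, zero_mul, add_zero]
  refine Finset.sum_congr rfl fun k hk => ?_
  simp only [Finset.mem_range] at hk
  have hset : (Finset.Icc (1:ℤ) (m.natAbs:ℤ)).filter
        (fun x => (12 * x / (m.natAbs:ℤ)).toNat = k)
      = (Finset.Icc (1:ℤ) (m.natAbs:ℤ)).filter
        (fun x => (k:ℤ) * (m.natAbs:ℤ) < 12 * x ∧ 12 * x < ((k:ℤ) + 1) * (m.natAbs:ℤ)) := by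
    ext x
    simp only [Finset.mem_filter, Finset.mem_Icc]
    constructor
    · rintro ⟨⟨hx1, hx2⟩, hx3⟩
      have hd0 : 0 ≤ 12 * x / (m.natAbs:ℤ) := Int.ediv_nonneg (by omega) (by omega)
      have heq : 12 * x / (m.natAbs:ℤ) = (k:ℤ) := by
        rw [← Int.toNat_of_nonneg hd0, hx3]
      refine ⟨⟨hx1, hx2⟩, ?_, ?_⟩
      · have hdk : (k:ℤ) * (m.natAbs:ℤ) ≤ 12 * x := by
          rw [← Int.le_ediv_iff_mul_le (by omega : (0:ℤ) < (m.natAbs:ℤ))]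
          exact le_of_eq heq.symm
        rcases hdk.lt_or_eq with h | h
        · exact h
        · exfalso
          have hdvd : (m.natAbs:ℤ) ∣ 12 * x := Dvd.intro_left (k:ℤ) h
          have hdx : (m.natAbs:ℤ) ∣ x := (hcop.symm).dvd_of_dvd_mul_left hdvd
          have hxN : x = (m.natAbs:ℤ) := le_antisymm hx2 (Int.le_of_dvd (by omega) hdx)
          have hk12 : (k:ℤ) = 12 := by
            have h' : (k:ℤ) * (m.natAbs:ℤ) = 12 * (m.natAbs:ℤ) := by rw [h, hxN]
            exact mul_right_cancel₀ (by omega) h'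
          omega
      · have h5 : 12 * x / (m.natAbs:ℤ) < (k:ℤ) + 1 := by omega
        rw [Int.ediv_lt_iff_lt_mul (by omega)] at h5
        linarith
    · rintro ⟨⟨hx1, hx2⟩, h1, h2⟩
      refine ⟨⟨hx1, hx2⟩, ?_⟩
      have hlo : (k:ℤ) ≤ 12 * x / (m.natAbs:ℤ) := by
        rw [Int.le_ediv_iff_mul_le (by omega : (0:ℤ) < (m.natAbs:ℤ))]; linarith
      have hhi : 12 * x / (m.natAbs:ℤ) < (k:ℤ) + 1 := by
        rw [Int.ediv_lt_iff_lt_mul (by omega)]; linarith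
      omega
  rw [hset, EJ, Finset.mul_sum]
  refine Finset.sum_congr rfl fun x hx => ?_
  simp only [Finset.mem_filter, Finset.mem_Icc] at hx
  obtain ⟨⟨hx1, hx2⟩, h1, h2⟩ := hx
  have hq := Int.mul_ediv_add_emod (k:ℤ) c
  have hr0 := Int.emod_nonneg (k:ℤ) (by omega : c ≠ 0)
  have hrlt := Int.emod_lt_of_pos (k:ℤ) hc0
  have hcq1 : c * ((k:ℤ) / c) ≤ (k:ℤ) := by linarith
  have hcq2 : (k:ℤ) < c * ((k:ℤ) / c) + c := by linarith
  have t1 : 0 ≤ (a * (m.natAbs:ℤ)) * ((k:ℤ) - c * ((k:ℤ) / c)) :=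
    mul_nonneg (mul_nonneg ha.le (by omega)) (by linarith)
  have t2 : 0 < a * (12 * x - (k:ℤ) * (m.natAbs:ℤ)) := mul_pos ha (by linarith)
  have e1 : a * (m.natAbs:ℤ) * (c * ((k:ℤ) / c)) = 12 * (((k:ℤ) / c) * (m.natAbs:ℤ)) := by
    linear_combination ((m.natAbs:ℤ) * ((k:ℤ) / c)) * hac
  have hL : ((k:ℤ) / c) * (m.natAbs:ℤ) < a * x := by nlinarith [t1, t2, e1]
  have t3 : 0 ≤ (a * (m.natAbs:ℤ)) * (c * ((k:ℤ) / c) + c - ((k:ℤ) + 1)) :=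
    mul_nonneg (mul_nonneg ha.le (by omega)) (by linarith)
  have t4 : 0 < a * (((k:ℤ) + 1) * (m.natAbs:ℤ) - 12 * x) := mul_pos ha (by linarith)
  have e2 : a * (m.natAbs:ℤ) * (c * ((k:ℤ) / c) + c)
      = 12 * (((k:ℤ) / c) * (m.natAbs:ℤ)) + 12 * (m.natAbs:ℤ) := by
    linear_combination ((m.natAbs:ℤ) * ((k:ℤ) / c) + (m.natAbs:ℤ)) * hac
  have hH : a * x < (((k:ℤ) / c) + 1) * (m.natAbs:ℤ) := by nlinarith [t3, t4, e2]
  have hdiv : a * x / (m.natAbs:ℤ) = (k:ℤ) / c := by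
    have u1 : (k:ℤ) / c ≤ a * x / (m.natAbs:ℤ) := by
      rw [Int.le_ediv_iff_mul_le (by omega : (0:ℤ) < (m.natAbs:ℤ))]; linarith
    have u2 : a * x / (m.natAbs:ℤ) < (k:ℤ) / c + 1 := by
      rw [Int.ediv_lt_iff_lt_mul (by omega)]; linarith
    omega
  rw [hdiv]; ring

lemma EJ_antisym (m : ℤ) (hm : m < -4) (hmod : m % 4 = 1) (k : ℤ) (hk0 : 0 ≤ k) (hk : k ≤ 11) :
    EJ m 12 (11 - k) = - EJ m 12 k := by
  have hN1 : 1 < m.natAbs := by omega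
  have hNZ : (1:ℤ) < (m.natAbs:ℤ) := by exact_mod_cast hN1
  have hN4 : m.natAbs % 4 = 3 := by omega
  have hOdd : Odd m.natAbs := by rw [Nat.odd_iff]; omega
  have hχ4 : ZMod.χ₄ (m.natAbs : ZMod 4) = -1 := ZMod.χ₄_nat_three_mod_four hN4
  have hneg : ∀ x : ℤ, jacobiSym ((m.natAbs:ℤ) - x) m.natAbs = - jacobiSym x m.natAbs := by
    intro x
    have h1 : ((m.natAbs:ℤ) - x) ≡ (-x) [ZMOD (m.natAbs:ℤ)] :=
      Int.modEq_iff_dvd.mpr ⟨-1, by ring⟩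
    rw [jacobiSym.mod_left' h1, jacobiSym.neg x hOdd, hχ4]
    ring
  have hkN : 0 ≤ k * (m.natAbs:ℤ) := mul_nonneg hk0 (by omega)
  have h11k : 0 ≤ (11 - k) * (m.natAbs:ℤ) := mul_nonneg (by omega) (by omega)
  have hkey : ∑ x ∈ (Finset.Icc (1:ℤ) (m.natAbs:ℤ)).filter
        (fun x => (11 - k) * (m.natAbs:ℤ) < 12 * x ∧ 12 * x < (11 - k + 1) * (m.natAbs:ℤ)),
        jacobiSym x m.natAbs
      = ∑ x ∈ (Finset.Icc (1:ℤ) (m.natAbs:ℤ)).filter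
        (fun x => k * (m.natAbs:ℤ) < 12 * x ∧ 12 * x < (k + 1) * (m.natAbs:ℤ)),
        (- jacobiSym x m.natAbs) := by
    refine Finset.sum_nbij' (fun x => (m.natAbs:ℤ) - x) (fun x => (m.natAbs:ℤ) - x)
        ?_ ?_ ?_ ?_ ?_
    · intro x hx
      simp only [Finset.mem_filter, Finset.mem_Icc] at hx ⊢
      obtain ⟨⟨h1, h2⟩, h3, h4⟩ := hx
      refine ⟨⟨by nlinarith, by nlinarith⟩, by nlinarith, by nlinarith⟩
    · intro x hx
      simp only [Finset.mem_filter, Finset.mem_Icc] at hx ⊢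
      obtain ⟨⟨h1, h2⟩, h3, h4⟩ := hx
      refine ⟨⟨by nlinarith, by nlinarith⟩, by nlinarith, by nlinarith⟩
    · intro x _; ring
    · intro x _; ring
    · intro x _
      show jacobiSym x m.natAbs = - jacobiSym ((m.natAbs:ℤ) - x) m.natAbs
      rw [hneg x]; ring
  rw [EJ, EJ, hkey, Finset.sum_neg_distrib]

set_option maxHeartbeats 1600000 in
/-- Theorem 4.4: for squarefree `m < −4`, `m ≡ 1 (mod 4)`,
`3 ∤ m`, `N = |m|`, the values of `E₁(12), …, E₅(12)` in terms of `h` and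
`E₀ = E₀(12)` according to `N mod 24`. -/
theorem twelfths_distribution (m : ℤ) (hm : m < -4) (hsf : Squarefree m)
    (hmod : m % 4 = 1) (h3 : ¬ (3 ∣ m)) :
    (m.natAbs % 24 = 23 →
        ((EJ m 12 1 : ℤ) : ℚ) = hJ m - (EJ m 12 0 : ℤ) ∧
        EJ m 12 2 = 0 ∧ EJ m 12 3 = 0 ∧
        ((EJ m 12 4 : ℤ) : ℚ) = hJ m - (EJ m 12 0 : ℤ) ∧
        ((EJ m 12 5 : ℤ) : ℚ) = -hJ m + (EJ m 12 0 : ℤ)) ∧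
      (m.natAbs % 24 = 11 →
        ((EJ m 12 1 : ℤ) : ℚ) = hJ m - (EJ m 12 0 : ℤ) ∧
        ((EJ m 12 2 : ℤ) : ℚ) = -hJ m ∧ ((EJ m 12 3 : ℤ) : ℚ) = hJ m ∧
        ((EJ m 12 4 : ℤ) : ℚ) = hJ m - (EJ m 12 0 : ℤ) ∧
        ((EJ m 12 5 : ℤ) : ℚ) = hJ m + (EJ m 12 0 : ℤ)) ∧
      (m.natAbs % 24 = 7 →
        ((EJ m 12 1 : ℤ) : ℚ) = hJ m - (EJ m 12 0 : ℤ) ∧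
        EJ m 12 2 = 0 ∧ ((EJ m 12 3 : ℤ) : ℚ) = hJ m ∧
        ((EJ m 12 4 : ℤ) : ℚ) = -(EJ m 12 0 : ℤ) ∧
        ((EJ m 12 5 : ℤ) : ℚ) = -hJ m + (EJ m 12 0 : ℤ)) ∧
      (m.natAbs % 24 = 19 →
        ((EJ m 12 1 : ℤ) : ℚ) = -hJ m - (EJ m 12 0 : ℤ) ∧
        ((EJ m 12 2 : ℤ) : ℚ) = hJ m ∧ ((EJ m 12 3 : ℤ) : ℚ) = 2 * hJ m ∧
        ((EJ m 12 4 : ℤ) : ℚ) = 2 * hJ m - (EJ m 12 0 : ℤ) ∧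
        ((EJ m 12 5 : ℤ) : ℚ) = -hJ m + (EJ m 12 0 : ℤ)) := by
  have hN1 : 1 < m.natAbs := by omega
  have hOdd : Odd m.natAbs := by rw [Nat.odd_iff]; omega
  have hNQ : (m.natAbs:ℚ) ≠ 0 := Nat.cast_ne_zero.mpr (by omega)
  have c2 : Nat.Coprime 2 m.natAbs := (Nat.prime_two.coprime_iff_not_dvd).mpr (by omega)
  have c3 : Nat.Coprime 3 m.natAbs := (Nat.prime_three.coprime_iff_not_dvd).mpr (by omega)
  have i2 : IsCoprime (2:ℤ) (m.natAbs:ℤ) := by simpa using c2.isCoprime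
  have i3 : IsCoprime (3:ℤ) (m.natAbs:ℤ) := by simpa using c3.isCoprime
  have i4 : IsCoprime (4:ℤ) (m.natAbs:ℤ) := by
    rw [show (4:ℤ) = 2 * 2 by norm_num]; exact i2.mul_left i2
  have i6 : IsCoprime (6:ℤ) (m.natAbs:ℤ) := by
    rw [show (6:ℤ) = 2 * 3 by norm_num]; exact i2.mul_left i3
  have i12 : IsCoprime (12:ℤ) (m.natAbs:ℤ) := by
    rw [show (12:ℤ) = 4 * 3 by norm_num]; exact i4.mul_left i3
  have j4 : jacobiSym 4 m.natAbs = jacobiSym 2 m.natAbs * jacobiSym 2 m.natAbs := by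
    rw [show (4:ℤ) = 2 * 2 by norm_num, jacobiSym.mul_left]
  have j6 : jacobiSym 6 m.natAbs = jacobiSym 2 m.natAbs * jacobiSym 3 m.natAbs := by
    rw [show (6:ℤ) = 2 * 3 by norm_num, jacobiSym.mul_left]
  have j12 : jacobiSym 12 m.natAbs
      = jacobiSym 2 m.natAbs * jacobiSym 2 m.natAbs * jacobiSym 3 m.natAbs := by
    rw [show (12:ℤ) = 2 * 2 * 3 by norm_num, jacobiSym.mul_left, jacobiSym.mul_left]
  have E2 := key m.natAbs hN1 2 i2
  have E3 := key m.natAbs hN1 3 i3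
  have E4 := key m.natAbs hN1 4 i4
  have E6 := key m.natAbs hN1 6 i6
  have E12 := key m.natAbs hN1 12 i12
  rw [partition m hm i12 2 6 (by norm_num) (by norm_num) (by norm_num)] at E2
  rw [partition m hm i12 3 4 (by norm_num) (by norm_num) (by norm_num)] at E3
  rw [partition m hm i12 4 3 (by norm_num) (by norm_num) (by norm_num)] at E4
  rw [partition m hm i12 6 2 (by norm_num) (by norm_num) (by norm_num)] at E6
  rw [partition m hm i12 12 1 (by norm_num) (by norm_num) (by norm_num)] at E12
  rw [j4] at E4
  rw [j6] at E6
  rw [j12] at E12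
  norm_num [Finset.sum_range_succ] at E2 E3 E4 E6 E12
  have s6 : EJ m 12 6 = - EJ m 12 5 := by
    have := EJ_antisym m hm hmod 5 (by norm_num) (by norm_num); norm_num at this; exact this
  have s7 : EJ m 12 7 = - EJ m 12 4 := by
    have := EJ_antisym m hm hmod 4 (by norm_num) (by norm_num); norm_num at this; exact this
  have s8 : EJ m 12 8 = - EJ m 12 3 := by
    have := EJ_antisym m hm hmod 3 (by norm_num) (by norm_num); norm_num at this; exact this
  have s9 : EJ m 12 9 = - EJ m 12 2 := by
    have := EJ_antisym m hm hmod 2 (by norm_num) (by norm_num); norm_num at this; exact this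
  have s10 : EJ m 12 10 = - EJ m 12 1 := by
    have := EJ_antisym m hm hmod 1 (by norm_num) (by norm_num); norm_num at this; exact this
  have s11 : EJ m 12 11 = - EJ m 12 0 := by
    have := EJ_antisym m hm hmod 0 (by norm_num) (by norm_num); norm_num at this; exact this
  have habs : ((m.natAbs:ℕ):ℤ) = |m| := Int.natCast_natAbs m
  have habsQ : ((m.natAbs:ℕ):ℚ) = |(m:ℚ)| := by simp [Nat.cast_natAbs]
  have hNQ' : |(m:ℚ)| ≠ 0 := by rw [← habsQ]; exact hNQ
  have hT : ∑ x ∈ Finset.Icc (1:ℤ) |m|, (jacobiSym x m.natAbs : ℚ) * (x:ℚ)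
      = -|(m:ℚ)| * hJ m := by
    unfold hJ
    rw [habs, habsQ]
    field_simp
  have hdiv : ∀ L C : ℤ, (|m| * L
      = C * ∑ x ∈ Finset.Icc (1:ℤ) |m|, jacobiSym x m.natAbs * x)
      → ((L:ℚ) = -((C:ℚ) * hJ m)) := by
    intro L C hLC
    have h0 := congrArg (fun z : ℤ => (z:ℚ)) hLC
    push_cast at h0
    apply mul_left_cancel₀ hNQ'
    rw [h0, hT]; ring
  have Q2 := hdiv _ _ E2
  have Q3 := hdiv _ _ E3
  have Q4 := hdiv _ _ E4
  have Q6 := hdiv _ _ E6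
  have Q12 := hdiv _ _ E12
  push_cast at Q2 Q3 Q4 Q6 Q12
  have s6Q : ((EJ m 12 6 : ℤ):ℚ) = -((EJ m 12 5 : ℤ):ℚ) := by exact_mod_cast congrArg (fun z : ℤ => (z:ℚ)) s6
  have s7Q : ((EJ m 12 7 : ℤ):ℚ) = -((EJ m 12 4 : ℤ):ℚ) := by exact_mod_cast congrArg (fun z : ℤ => (z:ℚ)) s7
  have s8Q : ((EJ m 12 8 : ℤ):ℚ) = -((EJ m 12 3 : ℤ):ℚ) := by exact_mod_cast congrArg (fun z : ℤ => (z:ℚ)) s8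
  have s9Q : ((EJ m 12 9 : ℤ):ℚ) = -((EJ m 12 2 : ℤ):ℚ) := by exact_mod_cast congrArg (fun z : ℤ => (z:ℚ)) s9
  have s10Q : ((EJ m 12 10 : ℤ):ℚ) = -((EJ m 12 1 : ℤ):ℚ) := by exact_mod_cast congrArg (fun z : ℤ => (z:ℚ)) s10
  have s11Q : ((EJ m 12 11 : ℤ):ℚ) = -((EJ m 12 0 : ℤ):ℚ) := by exact_mod_cast congrArg (fun z : ℤ => (z:ℚ)) s11
  clear E2 E3 E4 E6 E12
  refine ⟨?_, ?_, ?_, ?_⟩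
  · -- N ≡ 23 mod 24 : χ2 = 1, χ3 = 1
    intro h24
    have hc2 : jacobiSym 2 m.natAbs = 1 := by
      rw [jacobiSym.at_two hOdd, ZMod.χ₈_nat_eq_if_mod_eight, if_neg (by omega),
        if_pos (by omega : m.natAbs % 8 = 1 ∨ m.natAbs % 8 = 7)]
    have hc3 : jacobiSym 3 m.natAbs = 1 := by
      have hrec := jacobiSym.quadratic_reciprocity_three_mod_four
        (by norm_num : (3:ℕ) % 4 = 3) (by omega : m.natAbs % 4 = 3)
      rw [jacobiSym.mod_left ((m.natAbs:ℕ):ℤ) 3,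
        show ((m.natAbs:ℤ)) % ((3:ℕ):ℤ) = 2 by push_cast; omega,
        jacobiSym.at_two (by decide : Odd 3), ZMod.χ₈_nat_eq_if_mod_eight] at hrec
      norm_num at hrec
      exact hrec
    simp only [hc2, hc3] at Q2 Q3 Q4 Q6 Q12
    norm_num at Q2 Q3 Q4 Q6 Q12
    refine ⟨by linarith [Q2, Q3, Q4, Q6, Q12, s6Q, s7Q, s8Q, s9Q, s10Q, s11Q], ?_, ?_,
      by linarith [Q2, Q3, Q4, Q6, Q12, s6Q, s7Q, s8Q, s9Q, s10Q, s11Q],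
      by linarith [Q2, Q3, Q4, Q6, Q12, s6Q, s7Q, s8Q, s9Q, s10Q, s11Q]⟩
    · have h0 : ((EJ m 12 2 : ℤ):ℚ) = 0 := by
        linarith [Q2, Q3, Q4, Q6, Q12, s6Q, s7Q, s8Q, s9Q, s10Q, s11Q]
      exact_mod_cast h0
    · have h0 : ((EJ m 12 3 : ℤ):ℚ) = 0 := by
        linarith [Q2, Q3, Q4, Q6, Q12, s6Q, s7Q, s8Q, s9Q, s10Q, s11Q]
      exact_mod_cast h0
  · -- N ≡ 11 mod 24 : χ2 = -1, χ3 = 1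
    intro h24
    have hc2 : jacobiSym 2 m.natAbs = -1 := by
      rw [jacobiSym.at_two hOdd, ZMod.χ₈_nat_eq_if_mod_eight, if_neg (by omega),
        if_neg (by omega : ¬(m.natAbs % 8 = 1 ∨ m.natAbs % 8 = 7))]
    have hc3 : jacobiSym 3 m.natAbs = 1 := by
      have hrec := jacobiSym.quadratic_reciprocity_three_mod_four
        (by norm_num : (3:ℕ) % 4 = 3) (by omega : m.natAbs % 4 = 3)
      rw [jacobiSym.mod_left ((m.natAbs:ℕ):ℤ) 3,
        show ((m.natAbs:ℤ)) % ((3:ℕ):ℤ) = 2 by push_cast; omega,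
        jacobiSym.at_two (by decide : Odd 3), ZMod.χ₈_nat_eq_if_mod_eight] at hrec
      norm_num at hrec
      exact hrec
    simp only [hc2, hc3] at Q2 Q3 Q4 Q6 Q12
    norm_num at Q2 Q3 Q4 Q6 Q12
    exact ⟨by linarith [Q2, Q3, Q4, Q6, Q12, s6Q, s7Q, s8Q, s9Q, s10Q, s11Q],
      by linarith [Q2, Q3, Q4, Q6, Q12, s6Q, s7Q, s8Q, s9Q, s10Q, s11Q],
      by linarith [Q2, Q3, Q4, Q6, Q12, s6Q, s7Q, s8Q, s9Q, s10Q, s11Q],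
      by linarith [Q2, Q3, Q4, Q6, Q12, s6Q, s7Q, s8Q, s9Q, s10Q, s11Q],
      by linarith [Q2, Q3, Q4, Q6, Q12, s6Q, s7Q, s8Q, s9Q, s10Q, s11Q]⟩
  · -- N ≡ 7 mod 24 : χ2 = 1, χ3 = -1
    intro h24
    have hc2 : jacobiSym 2 m.natAbs = 1 := by
      rw [jacobiSym.at_two hOdd, ZMod.χ₈_nat_eq_if_mod_eight, if_neg (by omega),
        if_pos (by omega : m.natAbs % 8 = 1 ∨ m.natAbs % 8 = 7)]
    have hc3 : jacobiSym 3 m.natAbs = -1 := by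
      have hrec := jacobiSym.quadratic_reciprocity_three_mod_four
        (by norm_num : (3:ℕ) % 4 = 3) (by omega : m.natAbs % 4 = 3)
      rw [jacobiSym.mod_left ((m.natAbs:ℕ):ℤ) 3,
        show ((m.natAbs:ℤ)) % ((3:ℕ):ℤ) = 1 by push_cast; omega,
        jacobiSym.one_left] at hrec
      norm_num at hrec
      exact hrec
    simp only [hc2, hc3] at Q2 Q3 Q4 Q6 Q12
    norm_num at Q2 Q3 Q4 Q6 Q12
    refine ⟨by linarith [Q2, Q3, Q4, Q6, Q12, s6Q, s7Q, s8Q, s9Q, s10Q, s11Q], ?_,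
      by linarith [Q2, Q3, Q4, Q6, Q12, s6Q, s7Q, s8Q, s9Q, s10Q, s11Q],
      by linarith [Q2, Q3, Q4, Q6, Q12, s6Q, s7Q, s8Q, s9Q, s10Q, s11Q],
      by linarith [Q2, Q3, Q4, Q6, Q12, s6Q, s7Q, s8Q, s9Q, s10Q, s11Q]⟩
    · have h0 : ((EJ m 12 2 : ℤ):ℚ) = 0 := by
        linarith [Q2, Q3, Q4, Q6, Q12, s6Q, s7Q, s8Q, s9Q, s10Q, s11Q]
      exact_mod_cast h0
  · -- N ≡ 19 mod 24 : χ2 = -1, χ3 = -1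
    intro h24
    have hc2 : jacobiSym 2 m.natAbs = -1 := by
      rw [jacobiSym.at_two hOdd, ZMod.χ₈_nat_eq_if_mod_eight, if_neg (by omega),
        if_neg (by omega : ¬(m.natAbs % 8 = 1 ∨ m.natAbs % 8 = 7))]
    have hc3 : jacobiSym 3 m.natAbs = -1 := by
      have hrec := jacobiSym.quadratic_reciprocity_three_mod_four
        (by norm_num : (3:ℕ) % 4 = 3) (by omega : m.natAbs % 4 = 3)
      rw [jacobiSym.mod_left ((m.natAbs:ℕ):ℤ) 3,
        show ((m.natAbs:ℤ)) % ((3:ℕ):ℤ) = 1 by push_cast; omega,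
        jacobiSym.one_left] at hrec
      norm_num at hrec
      exact hrec
    simp only [hc2, hc3] at Q2 Q3 Q4 Q6 Q12
    norm_num at Q2 Q3 Q4 Q6 Q12
    exact ⟨by linarith [Q2, Q3, Q4, Q6, Q12, s6Q, s7Q, s8Q, s9Q, s10Q, s11Q],
      by linarith [Q2, Q3, Q4, Q6, Q12, s6Q, s7Q, s8Q, s9Q, s10Q, s11Q],
      by linarith [Q2, Q3, Q4, Q6, Q12, s6Q, s7Q, s8Q, s9Q, s10Q, s11Q],
      by linarith [Q2, Q3, Q4, Q6, Q12, s6Q, s7Q, s8Q, s9Q, s10Q, s11Q],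
      by linarith [Q2, Q3, Q4, Q6, Q12, s6Q, s7Q, s8Q, s9Q, s10Q, s11Q]⟩
end
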